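/- arXiv:1611.07684 — 3 statements merged into one kernel-verified Lean document; each statement's English description precedes it below -/
import Mathlib

section
/- For any p,q ≥ 0, the tensor product Cl(1,1) ⊗ Cl(p,q) is isomorphic as an R-algebra to Cl(p+1,q+1). -/
open scoped TensorProduct Quaternion

/-- The diagonal quadratic form of signature `(p, q)` on `ℝ^(p+q)`. -/
noncomputable def signatureForm (p q : ℕ) : QuadraticForm ℝ (Fin (p + q) → ℝ) :=
  QuadraticMap.weightedSumSquares ℝ (fun i : Fin (p + q) => if (i : ℕ) < p then (1 : ℝ) else -1)

/-- The real Clifford algebra `Cl(p,q)`. -/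
noncomputable def Cl (p q : ℕ) : Type :=
  CliffordAlgebra (signatureForm p q)

noncomputable instance (p q : ℕ) : Ring (Cl p q) :=
  inferInstanceAs (Ring (CliffordAlgebra _))

noncomputable instance (p q : ℕ) : Algebra ℝ (Cl p q) :=
  inferInstanceAs (Algebra ℝ (CliffordAlgebra _))

/-- The commutative algebra `K(r,s)` with `r+s` commuting generators,
`r` squaring to `+1` and `s` squaring to `-1`. -/
noncomputable def K (r s : ℕ) : Type :=
  MvPolynomial (Fin (r + s)) ℝ ⧸ Ideal.span
    {f : MvPolynomial (Fin (r + s)) ℝ | ∃ i : Fin (r + s),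
      f = MvPolynomial.X i ^ 2 - MvPolynomial.C (if (i : ℕ) < r then (1 : ℝ) else -1)}

noncomputable instance (r s : ℕ) : CommRing (K r s) :=
  inferInstanceAs (CommRing (_ ⧸ _))

noncomputable instance (r s : ℕ) : Algebra ℝ (K r s) :=
  inferInstanceAs (Algebra ℝ (_ ⧸ _))

/-- The `k`-fold tensor power of an `ℝ`-algebra `A`. -/
noncomputable def tensorPow (A : Type) [Ring A] [Algebra ℝ A] (k : ℕ) : Type :=
  ⨂[ℝ] (_ : Fin k), A

noncomputable instance (A : Type) [Ring A] [Algebra ℝ A] (k : ℕ) : Ring (tensorPow A k) :=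
  inferInstanceAs (Ring (⨂[ℝ] (_ : Fin k), A))

noncomputable instance (A : Type) [Ring A] [Algebra ℝ A] (k : ℕ) : Algebra ℝ (tensorPow A k) :=
  inferInstanceAs (Algebra ℝ (⨂[ℝ] (_ : Fin k), A))

namespace Stmt4Proof
open CliffordAlgebra QuadraticMap

lemma sf_apply (p q : ℕ) (v : Fin (p+q) → ℝ) :
    signatureForm p q v = ∑ i : Fin (p+q), (if (i:ℕ) < p then (1:ℝ) else -1) * (v i * v i) := by
  simp [signatureForm, QuadraticMap.weightedSumSquares_apply, smul_eq_mul]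

lemma sf_single (p q : ℕ) (i : Fin (p+q)) (c : ℝ) :
    signatureForm p q (Pi.single i c) = (if (i:ℕ) < p then (1:ℝ) else -1) * (c*c) := by
  rw [sf_apply, Finset.sum_eq_single i]
  · simp
  · intro j _ hj; simp [Pi.single_apply, hj]
  · simp

lemma sf_isOrtho (p q : ℕ) {x y : Fin (p+q) → ℝ} (h : ∀ i, x i = 0 ∨ y i = 0) :
    (signatureForm p q).IsOrtho x y := by
  rw [QuadraticMap.isOrtho_def, sf_apply, sf_apply, sf_apply, ← Finset.sum_add_distrib]
  apply Finset.sum_congr rfl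
  intro i _
  rcases h i with h|h <;> simp [h] <;> ring

lemma sf_polar_zero (p q : ℕ) {x y : Fin (p+q) → ℝ} (h : ∀ i, x i = 0 ∨ y i = 0) :
    polar (signatureForm p q) x y = 0 :=
  (sf_isOrtho p q h).polar_eq_zero

/-- standard basis vector -/
noncomputable def sb {n : ℕ} (k : Fin n) : Fin n → ℝ := Pi.single k 1

lemma sb_apply {n : ℕ} (k i : Fin n) : sb k i = if i = k then 1 else 0 := Pi.single_apply k 1 i

variable (p q : ℕ)

def a0 : Fin ((p+1)+(q+1)) := ⟨0, by omega⟩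
def a1 : Fin ((p+1)+(q+1)) := ⟨p+1, by omega⟩
def emb (j : Fin (p+q)) : Fin ((p+1)+(q+1)) :=
  ⟨if (j:ℕ) < p then j+1 else j+2, by split <;> omega⟩

variable {p q}

lemma emb_injective : Function.Injective (emb p q) := by
  intro j k h
  have hj := j.isLt
  have hk := k.isLt
  simp only [emb, Fin.mk.injEq] at h
  ext
  split at h <;> split at h <;> omega

lemma emb_ne_a0 (j : Fin (p+q)) : emb p q j ≠ a0 p q := by
  simp only [emb, a0, ne_eq, Fin.mk.injEq]
  split <;> omega

lemma emb_ne_a1 (j : Fin (p+q)) : emb p q j ≠ a1 p q := by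
  have := j.isLt
  simp only [emb, a1, ne_eq, Fin.mk.injEq]
  split <;> omega

lemma a0_ne_a1 : a0 p q ≠ a1 p q := by
  simp [a0, a1, Fin.ext_iff]

lemma emb_lt (j : Fin (p+q)) : ((emb p q j : ℕ) < p+1) ↔ ((j:ℕ) < p) := by
  simp only [emb]
  split <;> omega

lemma index_cases (k : Fin ((p+1)+(q+1))) :
    k = a0 p q ∨ k = a1 p q ∨ ∃ j, emb p q j = k := by
  have hk := k.isLt
  by_cases h0 : (k:ℕ) = 0
  · exact Or.inl (by ext; simpa [a0] using h0)
  by_cases h1 : (k:ℕ) = p+1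
  · exact Or.inr (Or.inl (by ext; simpa [a1] using h1))
  refine Or.inr (Or.inr ⟨⟨if (k:ℕ) ≤ p then k-1 else k-2, by split <;> omega⟩, ?_⟩)
  ext
  simp only [emb]
  split <;> split <;> omega


variable (p q)

/-- embedding of `ℝ²` into the big space, hitting coordinates `a0, a1`. -/
noncomputable def U1 : (Fin (1+1) → ℝ) →ₗ[ℝ] (Fin ((p+1)+(q+1)) → ℝ) :=
  (LinearMap.proj 0).smulRight (sb (a0 p q)) +
    (LinearMap.proj 1).smulRight (sb (a1 p q))

/-- embedding of `ℝ^{p+q}` into the big space along `emb`. -/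
noncomputable def U2 : (Fin (p+q) → ℝ) →ₗ[ℝ] (Fin ((p+1)+(q+1)) → ℝ) :=
  ∑ j : Fin (p+q), (LinearMap.proj j).smulRight (sb (emb p q j))

/-- restriction along `emb`. -/
noncomputable def Rr : (Fin ((p+1)+(q+1)) → ℝ) →ₗ[ℝ] (Fin (p+q) → ℝ) :=
  LinearMap.funLeft ℝ ℝ (emb p q)

variable {p q}

lemma U1_apply (v : Fin (1+1) → ℝ) :
    U1 p q v = v 0 • sb (a0 p q) + v 1 • sb (a1 p q) := by
  simp [U1]

lemma U2_apply (v : Fin (p+q) → ℝ) :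
    U2 p q v = ∑ j : Fin (p+q), v j • sb (emb p q j) := by
  simp [U2, LinearMap.sum_apply]

lemma Rr_apply (v : Fin ((p+1)+(q+1)) → ℝ) : Rr p q v = v ∘ emb p q := rfl

lemma U2_apply_ne {k : Fin ((p+1)+(q+1))} (hk : ∀ j, emb p q j ≠ k)
    (v : Fin (p+q) → ℝ) : U2 p q v k = 0 := by
  rw [U2_apply, Finset.sum_apply]
  apply Finset.sum_eq_zero
  intro j _
  simp [sb, Pi.single_apply, hk j]

lemma U2_apply_emb (v : Fin (p+q) → ℝ) (j : Fin (p+q)) :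
    U2 p q v (emb p q j) = v j := by
  rw [U2_apply, Finset.sum_apply, Finset.sum_eq_single j]
  · simp [sb]
  · intro j' _ hj'
    simp only [Pi.smul_apply, sb_apply, smul_eq_mul]
    rw [if_neg (fun h : emb p q j = emb p q j' => hj' (emb_injective h).symm)]
    ring
  · simp

lemma U2_single (j : Fin (p+q)) :
    U2 p q (sb j) = sb (emb p q j) := by
  rw [U2_apply, Finset.sum_eq_single j]
  · simp [sb]
  · intro j' _ hj'
    have : sb j j' = 0 := by rw [sb_apply, if_neg hj']
    rw [this, zero_smul]
  · simp

lemma QT_U2 (v : Fin (p+q) → ℝ) :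
    signatureForm (p+1) (q+1) (U2 p q v) = signatureForm p q v := by
  rw [sf_apply, sf_apply]
  have hinj : ∀ j ∈ (Finset.univ : Finset (Fin (p+q))), ∀ j' ∈ Finset.univ,
      emb p q j = emb p q j' → j = j' := fun j _ j' _ h => emb_injective h
  rw [← Finset.sum_subset
      (Finset.subset_univ (Finset.univ.image (emb p q)))
      (f := fun k : Fin ((p+1)+(q+1)) => (if (k:ℕ) < p+1 then (1:ℝ) else -1) * (U2 p q v k * U2 p q v k))
      ?_]
  · rw [Finset.sum_image hinj]
    apply Finset.sum_congr rfl
    intro j _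
    rw [U2_apply_emb]
    congr 1
    simp only [emb_lt]
  · intro k _ hk
    have : ∀ j, emb p q j ≠ k := by
      intro j hj
      exact hk (Finset.mem_image.2 ⟨j, Finset.mem_univ j, hj⟩)
    rw [U2_apply_ne this]
    ring

lemma decompose (v : Fin ((p+1)+(q+1)) → ℝ) :
    v = v (a0 p q) • sb (a0 p q) + v (a1 p q) • sb (a1 p q)
      + U2 p q (Rr p q v) := by
  funext k
  rcases index_cases k with rfl | rfl | ⟨j, rfl⟩
  · have h1 : ∀ j, emb p q j ≠ a0 p q := emb_ne_a0
    simp [sb, Pi.single_apply, (a0_ne_a1 (p := p) (q := q)).symm, U2_apply_ne h1]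
  · have h1 : ∀ j, emb p q j ≠ a1 p q := emb_ne_a1
    simp [sb, Pi.single_apply, a0_ne_a1 (p := p) (q := q), U2_apply_ne h1]
  · simp [sb, Pi.single_apply, (emb_ne_a0 j).symm, (emb_ne_a1 j).symm, U2_apply_emb,
      Rr_apply]

lemma QT_decompose (v : Fin ((p+1)+(q+1)) → ℝ) :
    signatureForm (p+1) (q+1) v
      = v (a0 p q) * v (a0 p q) - v (a1 p q) * v (a1 p q)
        + signatureForm p q (Rr p q v) := by
  set x := v (a0 p q) • sb (a0 p q) with hx
  set y := v (a1 p q) • sb (a1 p q) with hy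
  set z := U2 p q (Rr p q v) with hz
  have hxk : ∀ k, k ≠ a0 p q → x k = 0 := by
    intro k hk; simp [hx, sb, Pi.single_apply, Ne.symm hk]
  have hyk : ∀ k, k ≠ a1 p q → y k = 0 := by
    intro k hk; simp [hy, sb, Pi.single_apply, Ne.symm hk]
  have hxy : (signatureForm (p+1) (q+1)).IsOrtho x y := by
    apply sf_isOrtho
    intro k
    by_cases h : k = a0 p q
    · exact Or.inr (hyk k (h ▸ a0_ne_a1))
    · exact Or.inl (hxk k h)
  have hxyz : (signatureForm (p+1) (q+1)).IsOrtho (x + y) z := by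
    apply sf_isOrtho
    intro k
    rcases index_cases k with rfl | rfl | ⟨j, rfl⟩
    · exact Or.inr (U2_apply_ne emb_ne_a0 _)
    · exact Or.inr (U2_apply_ne emb_ne_a1 _)
    · refine Or.inl ?_
      have := hxk _ (emb_ne_a0 j)
      have := hyk _ (emb_ne_a1 j)
      rw [Pi.add_apply, ‹x (emb p q j) = 0›, ‹y (emb p q j) = 0›, add_zero]
  have hv : v = x + y + z := decompose v
  have expand : signatureForm (p+1) (q+1) v
      = signatureForm (p+1) (q+1) x + signatureForm (p+1) (q+1) y
        + signatureForm (p+1) (q+1) z := by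
    calc signatureForm (p+1) (q+1) v = signatureForm (p+1) (q+1) (x + y + z) := by rw [← hv]
    _ = _ := by
      rw [QuadraticMap.map_add (signatureForm (p+1) (q+1)) (x+y) z,
        QuadraticMap.map_add (signatureForm (p+1) (q+1)) x y,
        hxyz.polar_eq_zero, hxy.polar_eq_zero]
      ring
  rw [expand, hx, hy, hz, QuadraticMap.map_smul, QuadraticMap.map_smul]
  unfold sb
  rw [sf_single, sf_single, QT_U2]
  have h0 : ((a0 p q : ℕ) < p + 1) := by simp [a0]
  have h1 : ¬ ((a1 p q : ℕ) < p + 1) := by simp [a1]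
  rw [if_pos h0, if_neg h1]
  simp only [smul_eq_mul]
  ring

/-! ### generic ring helpers -/

lemma anti_mul_anti {A : Type*} [Ring A] {x a b : A}
    (ha : x * a = -(a * x)) (hb : x * b = -(b * x)) : Commute x (a * b) := by
  show x * (a * b) = (a * b) * x
  calc x * (a * b) = (x * a) * b := (mul_assoc _ _ _).symm
  _ = -(a * (x * b)) := by rw [ha]; noncomm_ring
  _ = (a * b) * x := by rw [hb]; noncomm_ring

lemma comm_mul_anti {A : Type*} [Ring A] {x a b : A}
    (ha : x * a = a * x) (hb : x * b = -(b * x)) : x * (a * b) = -((a * b) * x) := by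
  calc x * (a * b) = (x * a) * b := (mul_assoc _ _ _).symm
  _ = a * (x * b) := by rw [ha]; noncomm_ring
  _ = -((a * b) * x) := by rw [hb]; noncomm_ring

lemma anti_mul_comm {A : Type*} [Ring A] {x a b : A}
    (ha : x * a = -(a * x)) (hb : x * b = b * x) : x * (a * b) = -((a * b) * x) := by
  calc x * (a * b) = (x * a) * b := (mul_assoc _ _ _).symm
  _ = -(a * (x * b)) := by rw [ha]; noncomm_ring
  _ = -((a * b) * x) := by rw [hb]; noncomm_ring

lemma sq_helper {A : Type*} [Ring A] {a b : A} (h : b * a = -(a * b)) :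
    (a * b) * (a * b) = -((a * a) * (b * b)) := by
  calc (a * b) * (a * b) = a * (b * a) * b := by noncomm_ring
  _ = -((a * a) * (b * b)) := by rw [h]; noncomm_ring

/-! ### orthogonality of basis vectors -/

open CliffordAlgebra in
lemma ι_anti {p q : ℕ} {x y : Fin (p+q) → ℝ} (h : ∀ i, x i = 0 ∨ y i = 0) :
    ι (signatureForm p q) x * ι (signatureForm p q) y
      = -(ι (signatureForm p q) y * ι (signatureForm p q) x) :=
  ι_mul_ι_comm_of_isOrtho (sf_isOrtho p q h)

lemma sb_disj {n : ℕ} {i j : Fin n} (h : i ≠ j) (c d : ℝ) :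
    ∀ k, (c • sb i) k = 0 ∨ (d • sb j) k = 0 := by
  intro k
  by_cases hk : k = i
  · right; subst hk; simp [sb, Pi.single_apply, h]
  · left; simp [sb, Pi.single_apply, hk]

/-! ### the target Clifford algebra and its generators -/

variable (p q)

local notation "QT" => signatureForm (p+1) (q+1)
local notation "QS" => signatureForm p q
local notation "Q2" => signatureForm 1 1

noncomputable def E0 : CliffordAlgebra QT := CliffordAlgebra.ι QT (sb (a0 p q))
noncomputable def E1 : CliffordAlgebra QT := CliffordAlgebra.ι QT (sb (a1 p q))
noncomputable def Om : CliffordAlgebra QT := E0 p q * E1 p q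

variable {p q}

open CliffordAlgebra

lemma E0_sq : E0 p q * E0 p q = 1 := by
  rw [E0, ι_sq_scalar]
  have : QT (sb (a0 p q)) = 1 := by
    rw [sb, sf_single, if_pos (by simp [a0])]; ring
  rw [this, map_one]

lemma E1_sq : E1 p q * E1 p q = -1 := by
  rw [E1, ι_sq_scalar]
  have : QT (sb (a1 p q)) = -1 := by
    rw [sb, sf_single, if_neg (by simp [a1])]; ring
  rw [this, _root_.map_neg, map_one]

lemma E1_anti_E0 : E1 p q * E0 p q = -(E0 p q * E1 p q) := by
  rw [E0, E1]
  exact ι_anti fun k => by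
    simpa using sb_disj (Ne.symm (a0_ne_a1 (p := p) (q := q))) 1 1 k

lemma Om_sq : Om p q * Om p q = 1 := by
  rw [Om, sq_helper E1_anti_E0, E0_sq, E1_sq]
  simp

lemma E0_anti_Om : E0 p q * Om p q = -(Om p q * E0 p q) := by
  rw [Om]
  exact comm_mul_anti rfl (by rw [E1_anti_E0, neg_neg])

lemma E1_anti_Om : E1 p q * Om p q = -(Om p q * E1 p q) := by
  rw [Om]
  exact anti_mul_comm E1_anti_E0 rfl

/-! ### behaviour of `ι ∘ U1`, `ι ∘ U2` -/

lemma U1_support (v : Fin (1+1) → ℝ) (k : Fin ((p+1)+(q+1)))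
    (h0 : k ≠ a0 p q) (h1 : k ≠ a1 p q) : U1 p q v k = 0 := by
  rw [U1_apply]
  simp [sb, Pi.single_apply, h0, h1]

lemma ιU1_eq (v : Fin (1+1) → ℝ) :
    ι QT (U1 p q v) = v 0 • E0 p q + v 1 • E1 p q := by
  rw [U1_apply, map_add, _root_.map_smul, _root_.map_smul, E0, E1]

lemma ιU2_anti_E0 (w : Fin (p+q) → ℝ) :
    ι QT (U2 p q w) * E0 p q = -(E0 p q * ι QT (U2 p q w)) := by
  rw [E0]
  exact ι_anti fun k => by
    by_cases hk : k = a0 p q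
    · left; subst hk; exact U2_apply_ne emb_ne_a0 w
    · right; simp [sb, Pi.single_apply, hk]

lemma ιU2_anti_E1 (w : Fin (p+q) → ℝ) :
    ι QT (U2 p q w) * E1 p q = -(E1 p q * ι QT (U2 p q w)) := by
  rw [E1]
  exact ι_anti fun k => by
    by_cases hk : k = a1 p q
    · left; subst hk; exact U2_apply_ne emb_ne_a1 w
    · right; simp [sb, Pi.single_apply, hk]

lemma ιU2_comm_Om (w : Fin (p+q) → ℝ) :
    Commute (ι QT (U2 p q w)) (Om p q) := by
  rw [Om]
  exact anti_mul_anti (ιU2_anti_E0 w) (ιU2_anti_E1 w)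

lemma ιU1_anti_Om (v : Fin (1+1) → ℝ) :
    ι QT (U1 p q v) * Om p q = -(Om p q * ι QT (U1 p q v)) := by
  rw [ιU1_eq]
  rw [add_mul, smul_mul_assoc, smul_mul_assoc, E0_anti_Om, E1_anti_Om,
    mul_add, mul_smul_comm, mul_smul_comm, smul_neg, smul_neg, neg_add]

lemma ιU1_anti_ιU2 (v : Fin (1+1) → ℝ) (w : Fin (p+q) → ℝ) :
    ι QT (U1 p q v) * ι QT (U2 p q w) = -(ι QT (U2 p q w) * ι QT (U1 p q v)) := by
  refine ι_anti fun k => ?_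
  by_cases h0 : k = a0 p q
  · right; subst h0; exact U2_apply_ne emb_ne_a0 w
  by_cases h1 : k = a1 p q
  · right; subst h1; exact U2_apply_ne emb_ne_a1 w
  · left; exact U1_support v k h0 h1

lemma QT_U1 (v : Fin (1+1) → ℝ) : QT ((U1 p q) v) = Q2 v := by
  rw [U1_apply,
    QuadraticMap.map_add (signatureForm (p+1) (q+1)) (v 0 • sb (a0 p q)) (v 1 • sb (a1 p q)),
    (sf_isOrtho (p+1) (q+1) (sb_disj (a0_ne_a1 (p := p) (q := q)) (v 0) (v 1))).polar_eq_zero,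
    QuadraticMap.map_smul, QuadraticMap.map_smul]
  unfold sb
  rw [sf_single, sf_single, if_pos (by simp [a0]), if_neg (by simp [a1]), sf_apply]
  rw [Fin.sum_univ_succ, Fin.sum_univ_succ, Finset.univ_eq_empty, Finset.sum_empty]
  norm_num

/-! ### the two algebra maps into `Cl(p+1,q+1)` and the map `Φ` -/

variable (p q)

noncomputable def f1 : CliffordAlgebra Q2 →ₐ[ℝ] CliffordAlgebra QT :=
  CliffordAlgebra.lift Q2 ⟨(ι QT).comp (U1 p q), fun v => by
    rw [LinearMap.comp_apply, ι_sq_scalar, QT_U1]⟩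

noncomputable def f2 : CliffordAlgebra QS →ₐ[ℝ] CliffordAlgebra QT :=
  CliffordAlgebra.lift QS ⟨(LinearMap.mulLeft ℝ (Om p q)).comp ((ι QT).comp (U2 p q)),
    fun w => by
      simp only [LinearMap.comp_apply, LinearMap.mulLeft_apply]
      set W := ι QT (U2 p q w) with hW
      calc Om p q * W * (Om p q * W) = Om p q * (W * Om p q) * W := by noncomm_ring
      _ = (Om p q * Om p q) * (W * W) := by rw [(ιU2_comm_Om w).eq]; noncomm_ring
      _ = algebraMap ℝ _ (QS w) := by
          rw [Om_sq, one_mul, hW, ι_sq_scalar, QT_U2]⟩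

variable {p q}

lemma f1_ι (v : Fin (1+1) → ℝ) : f1 p q (ι Q2 v) = ι QT (U1 p q v) := by
  rw [f1, lift_ι_apply]; rfl

lemma f2_ι (w : Fin (p+q) → ℝ) : f2 p q (ι QS w) = Om p q * ι QT (U2 p q w) := by
  rw [f2, lift_ι_apply]; rfl

lemma f1_f2_commute : ∀ (a : CliffordAlgebra Q2) (b : CliffordAlgebra QS),
    Commute (f1 p q a) (f2 p q b) := by
  have base : ∀ (v : Fin (1+1) → ℝ) (w : Fin (p+q) → ℝ),
      Commute (f1 p q (ι Q2 v)) (f2 p q (ι QS w)) := by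
    intro v w
    rw [f1_ι, f2_ι]
    exact anti_mul_anti (ιU1_anti_Om v) (ιU1_anti_ιU2 v w)
  have step : ∀ (b : CliffordAlgebra QS) (v : Fin (1+1) → ℝ),
      Commute (f1 p q (ι Q2 v)) (f2 p q b) := by
    intro b
    induction b using CliffordAlgebra.induction with
    | algebraMap r => intro v; rw [AlgHom.commutes]; exact (Algebra.commutes r _).symm
    | ι w => intro v; exact base v w
    | mul x y hx hy => intro v; rw [map_mul]; exact (hx v).mul_right (hy v)
    | add x y hx hy => intro v; rw [map_add]; exact (hx v).add_right (hy v)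
  intro a b
  induction a using CliffordAlgebra.induction with
  | algebraMap r => rw [AlgHom.commutes]; exact Algebra.commutes r _
  | ι v => exact step b v
  | mul x y hx hy => rw [map_mul]; exact hx.mul_left hy
  | add x y hx hy => rw [map_add]; exact hx.add_left hy

variable (p q)

noncomputable def Phi : (CliffordAlgebra Q2 ⊗[ℝ] CliffordAlgebra QS) →ₐ[ℝ] CliffordAlgebra QT :=
  Algebra.TensorProduct.lift (f1 p q) (f2 p q) f1_f2_commute

variable {p q}

/-! ### `Cl(1,1)` generators -/

noncomputable def ee : CliffordAlgebra Q2 := ι Q2 (sb (0 : Fin (1+1)))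
noncomputable def ff : CliffordAlgebra Q2 := ι Q2 (sb (1 : Fin (1+1)))
noncomputable def om : CliffordAlgebra Q2 := ee * ff

lemma ee_sq : ee * ee = 1 := by
  rw [ee, ι_sq_scalar]
  have : Q2 (sb (0 : Fin (1+1))) = 1 := by
    rw [sb, sf_single]; norm_num
  rw [this, map_one]

lemma ff_sq : ff * ff = -1 := by
  rw [ff, ι_sq_scalar]
  have : Q2 (sb (1 : Fin (1+1))) = -1 := by
    rw [sb, sf_single]; norm_num
  rw [this, _root_.map_neg, map_one]

lemma ff_anti_ee : ff * ee = -(ee * ff) := by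
  rw [ee, ff]
  exact ι_anti fun k => by
    simpa using sb_disj (show (1 : Fin (1+1)) ≠ 0 by decide) 1 1 k

lemma om_sq : om * om = 1 := by
  rw [om, sq_helper ff_anti_ee, ee_sq, ff_sq]
  simp

lemma ee_anti_om : ee * om = -(om * ee) := by
  rw [om]
  exact comm_mul_anti rfl (by rw [ff_anti_ee, neg_neg])

lemma ff_anti_om : ff * om = -(om * ff) := by
  rw [om]
  exact anti_mul_comm ff_anti_ee rfl

/-! ### generic square expansion -/

lemma sq_three {T : Type*} [Ring T] [Algebra ℝ T] (c0 c1 z : ℝ) (a b g : T)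
    (haa : a * a = 1) (hbb : b * b = -1) (hab : b * a = -(a * b))
    (hag : g * a = -(a * g)) (hbg : g * b = -(b * g))
    (hgg : g * g = algebraMap ℝ T z) :
    (c0 • a + c1 • b + g) * (c0 • a + c1 • b + g)
      = algebraMap ℝ T (c0 * c0 - c1 * c1 + z) := by
  have h1 : algebraMap ℝ T (c0 * c0 - c1 * c1 + z)
      = (c0 * c0) • (1 : T) - (c1 * c1) • (1 : T) + algebraMap ℝ T z := by
    rw [map_add, _root_.map_sub, Algebra.algebraMap_eq_smul_one (A := T), Algebra.algebraMap_eq_smul_one (A := T)]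
  rw [h1, ← hgg]
  simp only [add_mul, mul_add, smul_mul_assoc, mul_smul_comm, smul_smul,
    haa, hbb, hab, hag, hbg, smul_neg, smul_add]
  module

/-! ### the map `Ψ` -/

variable (p q)

noncomputable def L : (Fin ((p+1)+(q+1)) → ℝ)
    →ₗ[ℝ] (CliffordAlgebra Q2 ⊗[ℝ] CliffordAlgebra QS) :=
  (LinearMap.proj (a0 p q)).smulRight (ee ⊗ₜ (1 : CliffordAlgebra QS)) +
    (LinearMap.proj (a1 p q)).smulRight (ff ⊗ₜ (1 : CliffordAlgebra QS)) +
    (TensorProduct.mk ℝ (CliffordAlgebra Q2) (CliffordAlgebra QS) om).comp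
      ((ι QS).comp (Rr p q))

variable {p q}

lemma L_apply (v : Fin ((p+1)+(q+1)) → ℝ) :
    L p q v = v (a0 p q) • (ee ⊗ₜ (1 : CliffordAlgebra QS))
      + v (a1 p q) • (ff ⊗ₜ (1 : CliffordAlgebra QS))
      + om ⊗ₜ ι QS (Rr p q v) := by
  simp [L, TensorProduct.mk_apply]

lemma tmul_one_mul_tmul_one (x y : CliffordAlgebra Q2) :
    (x ⊗ₜ[ℝ] (1 : CliffordAlgebra QS)) * (y ⊗ₜ[ℝ] (1 : CliffordAlgebra QS))
      = (x * y) ⊗ₜ[ℝ] (1 : CliffordAlgebra QS) := by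
  rw [Algebra.TensorProduct.tmul_mul_tmul, mul_one]

lemma tmul_one_mul_tmul (x y : CliffordAlgebra Q2) (w : CliffordAlgebra QS) :
    (x ⊗ₜ[ℝ] (1 : CliffordAlgebra QS)) * (y ⊗ₜ[ℝ] w) = (x * y) ⊗ₜ[ℝ] w := by
  rw [Algebra.TensorProduct.tmul_mul_tmul, one_mul]

lemma tmul_mul_tmul_one (x y : CliffordAlgebra Q2) (w : CliffordAlgebra QS) :
    (x ⊗ₜ[ℝ] w) * (y ⊗ₜ[ℝ] (1 : CliffordAlgebra QS)) = (x * y) ⊗ₜ[ℝ] w := by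
  rw [Algebra.TensorProduct.tmul_mul_tmul, mul_one]

lemma L_sq (v : Fin ((p+1)+(q+1)) → ℝ) :
    L p q v * L p q v = algebraMap ℝ _ (QT v) := by
  rw [L_apply, QT_decompose]
  apply sq_three
  · rw [tmul_one_mul_tmul_one, ee_sq]
    rfl
  · rw [tmul_one_mul_tmul_one, ff_sq]
    rw [TensorProduct.neg_tmul]
    rfl
  · rw [tmul_one_mul_tmul_one, tmul_one_mul_tmul_one, ff_anti_ee, TensorProduct.neg_tmul]
  · rw [tmul_mul_tmul_one, tmul_one_mul_tmul, ee_anti_om, TensorProduct.neg_tmul, neg_neg]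
  · rw [tmul_mul_tmul_one, tmul_one_mul_tmul, ff_anti_om, TensorProduct.neg_tmul, neg_neg]
  · rw [Algebra.TensorProduct.tmul_mul_tmul, om_sq, ι_sq_scalar]
    exact Algebra.TensorProduct.includeRight.commutes _

variable (p q)

noncomputable def Psi : CliffordAlgebra QT →ₐ[ℝ] (CliffordAlgebra Q2 ⊗[ℝ] CliffordAlgebra QS) :=
  CliffordAlgebra.lift QT ⟨L p q, L_sq⟩

variable {p q}

lemma Psi_ι (v : Fin ((p+1)+(q+1)) → ℝ) : Psi p q (ι QT v) = L p q v := by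
  rw [Psi, lift_ι_apply]

/-! ### values on generators -/

lemma U1_sb0 : U1 p q (sb 0) = sb (a0 p q) := by
  rw [U1_apply]
  have h0 : sb (0 : Fin (1+1)) 0 = 1 := by simp [sb]
  have h1 : sb (0 : Fin (1+1)) 1 = 0 := by
    rw [sb_apply, if_neg (by decide)]
  rw [h0, h1, one_smul, zero_smul, add_zero]

lemma U1_sb1 : U1 p q (sb 1) = sb (a1 p q) := by
  rw [U1_apply]
  have h0 : sb (1 : Fin (1+1)) 0 = 0 := by
    rw [sb_apply, if_neg (by decide)]
  have h1 : sb (1 : Fin (1+1)) 1 = 1 := by simp [sb]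
  rw [h0, h1, one_smul, zero_smul, zero_add]

lemma f1_ee : f1 p q ee = E0 p q := by rw [ee, f1_ι, U1_sb0, E0]
lemma f1_ff : f1 p q ff = E1 p q := by rw [ff, f1_ι, U1_sb1, E1]
lemma f1_om : f1 p q om = Om p q := by rw [om, map_mul, f1_ee, f1_ff, Om]

lemma Rr_sb_a0 : Rr p q (sb (a0 p q)) = 0 := by
  funext j
  rw [Rr_apply]
  exact (sb_apply _ _).trans (if_neg (emb_ne_a0 j))

lemma Rr_sb_a1 : Rr p q (sb (a1 p q)) = 0 := by
  funext j
  rw [Rr_apply]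
  exact (sb_apply _ _).trans (if_neg (emb_ne_a1 j))

lemma Rr_sb_emb (j : Fin (p+q)) : Rr p q (sb (emb p q j)) = sb j := by
  funext j'
  rw [Rr_apply]
  show sb (emb p q j) (emb p q j') = sb j j'
  rw [sb_apply, sb_apply]
  by_cases h : j' = j
  · rw [if_pos (by rw [h]), if_pos h]
  · rw [if_neg (fun hh => h (emb_injective hh)), if_neg h]

lemma L_sb_a0 : L p q (sb (a0 p q)) = ee ⊗ₜ[ℝ] (1 : CliffordAlgebra QS) := by
  rw [L_apply, Rr_sb_a0]
  have h0 : sb (a0 p q) (a0 p q) = 1 := by simp [sb]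
  have h1 : sb (a0 p q) (a1 p q) = 0 := by
    rw [sb_apply, if_neg (Ne.symm (a0_ne_a1 (p := p) (q := q)))]
  rw [h0, h1, map_zero, TensorProduct.tmul_zero, one_smul, zero_smul, add_zero, add_zero]

lemma L_sb_a1 : L p q (sb (a1 p q)) = ff ⊗ₜ[ℝ] (1 : CliffordAlgebra QS) := by
  rw [L_apply, Rr_sb_a1]
  have h0 : sb (a1 p q) (a0 p q) = 0 := by
    rw [sb_apply, if_neg (a0_ne_a1 (p := p) (q := q))]
  have h1 : sb (a1 p q) (a1 p q) = 1 := by simp [sb]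
  rw [h0, h1, map_zero, TensorProduct.tmul_zero, one_smul, zero_smul, add_zero, zero_add]

lemma L_sb_emb (j : Fin (p+q)) :
    L p q (sb (emb p q j)) = om ⊗ₜ[ℝ] ι QS (sb j) := by
  rw [L_apply, Rr_sb_emb]
  have h0 : sb (emb p q j) (a0 p q) = 0 := by
    rw [sb_apply, if_neg (Ne.symm (emb_ne_a0 j))]
  have h1 : sb (emb p q j) (a1 p q) = 0 := by
    rw [sb_apply, if_neg (Ne.symm (emb_ne_a1 j))]
  rw [h0, h1, zero_smul, zero_smul, zero_add, zero_add]

lemma Phi_tmul (x : CliffordAlgebra Q2) (y : CliffordAlgebra QS) :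
    Phi p q (x ⊗ₜ[ℝ] y) = f1 p q x * f2 p q y :=
  Algebra.TensorProduct.lift_tmul _ _ _ _ _

/-! ### the compositions are the identity -/

lemma Phi_comp_Psi : (Phi p q).comp (Psi p q) = AlgHom.id ℝ _ := by
  apply CliffordAlgebra.hom_ext
  apply (Pi.basisFun ℝ (Fin ((p+1)+(q+1)))).ext
  intro k
  have hb : (Pi.basisFun ℝ (Fin ((p+1)+(q+1)))) k = sb k := by
    simp [sb, Pi.basisFun_apply]
  simp only [LinearMap.comp_apply, AlgHom.toLinearMap_apply, AlgHom.comp_apply,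
    AlgHom.id_apply, hb]
  rw [Psi_ι]
  rcases index_cases k with rfl | rfl | ⟨j, rfl⟩
  · rw [L_sb_a0, Phi_tmul, map_one, mul_one, f1_ee, E0]
  · rw [L_sb_a1, Phi_tmul, map_one, mul_one, f1_ff, E1]
  · rw [L_sb_emb, Phi_tmul, f1_om, f2_ι, U2_single, ← mul_assoc, Om_sq, one_mul]

lemma Psi_comp_Phi : (Psi p q).comp (Phi p q) = AlgHom.id ℝ _ := by
  apply Algebra.TensorProduct.ext
  · apply CliffordAlgebra.hom_ext
    apply (Pi.basisFun ℝ (Fin (1+1))).ext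
    intro i
    have hb : (Pi.basisFun ℝ (Fin (1+1))) i = sb i := by
      simp [sb, Pi.basisFun_apply]
    simp only [LinearMap.comp_apply, AlgHom.toLinearMap_apply, AlgHom.comp_apply,
      AlgHom.id_apply, hb, Algebra.TensorProduct.includeLeft_apply]
    rw [Phi_tmul, map_one, mul_one]
    have h2 : i = 0 ∨ i = 1 := by
      rcases i with ⟨iv, hi⟩
      have : iv = 0 ∨ iv = 1 := by omega
      rcases this with rfl | rfl
      · left; rfl
      · right; rfl
    rcases h2 with rfl | rfl
    · rw [show ι Q2 (sb (0 : Fin (1+1))) = ee from rfl, f1_ee]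
      rw [show E0 p q = ι QT (sb (a0 p q)) from rfl, Psi_ι, L_sb_a0, ee]
    · rw [show ι Q2 (sb (1 : Fin (1+1))) = ff from rfl, f1_ff]
      rw [show E1 p q = ι QT (sb (a1 p q)) from rfl, Psi_ι, L_sb_a1, ff]
  · apply CliffordAlgebra.hom_ext
    apply (Pi.basisFun ℝ (Fin (p+q))).ext
    intro j
    have hb : (Pi.basisFun ℝ (Fin (p+q))) j = sb j := by
      simp [sb, Pi.basisFun_apply]
    simp only [LinearMap.comp_apply, AlgHom.toLinearMap_apply, AlgHom.comp_apply,
      AlgHom.id_apply, AlgHom.coe_restrictScalars', hb,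
      Algebra.TensorProduct.includeRight_apply]
    rw [Phi_tmul, map_one, one_mul, f2_ι, U2_single, map_mul]
    have hOm : Psi p q (Om p q) = om ⊗ₜ[ℝ] (1 : CliffordAlgebra QS) := by
      rw [Om, map_mul, E0, E1, Psi_ι, Psi_ι, L_sb_a0, L_sb_a1, tmul_one_mul_tmul_one, om]
    rw [hOm, show ι QT (sb (emb p q j)) = ι QT (sb (emb p q j)) from rfl, Psi_ι, L_sb_emb,
      tmul_one_mul_tmul, om_sq]

variable (p q)

noncomputable def equiv :
    (CliffordAlgebra Q2 ⊗[ℝ] CliffordAlgebra QS) ≃ₐ[ℝ] CliffordAlgebra QT :=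
  AlgEquiv.ofAlgHom (Phi p q) (Psi p q) (Phi_comp_Psi) (Psi_comp_Phi)

end Stmt4Proof

theorem stmt4 (p q : ℕ) : Nonempty ((Cl 1 1 ⊗[ℝ] Cl p q) ≃ₐ[ℝ] Cl (p + 1) (q + 1)) :=
  ⟨Stmt4Proof.equiv p q⟩
end

section
/- The commutative algebra K(r,s) generated by r+s pairwise commuting generators with r of them squaring to +1 and s squaring to -1 satisfies: if s ≥ 1 then K(r,s) is isomorphic as an R-algebra to the (r+s)-fold tensor product C^{⊗(r+s)} (tensor powers of Cl(0,1) ≅ C), and if s = 0 then K(r,0) is isomorphic to the r-fold tensor product (R×R)^{⊗r}. -/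
open scoped TensorProduct Quaternion

namespace Stmt16Aux

open MvPolynomial PiTensorProduct

noncomputable def kIdeal (r s : ℕ) : Ideal (MvPolynomial (Fin (r + s)) ℝ) :=
  Ideal.span {f : MvPolynomial (Fin (r + s)) ℝ | ∃ i : Fin (r + s),
      f = MvPolynomial.X i ^ 2 - MvPolynomial.C (if (i : ℕ) < r then (1 : ℝ) else -1)}

noncomputable def xK (r s : ℕ) (i : Fin (r + s)) : MvPolynomial (Fin (r + s)) ℝ ⧸ kIdeal r s :=
  Ideal.Quotient.mkₐ ℝ (kIdeal r s) (MvPolynomial.X i)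

lemma xK_sq (r s : ℕ) (i : Fin (r + s)) :
    xK r s i * xK r s i = algebraMap ℝ _ (if (i : ℕ) < r then (1 : ℝ) else -1) := by
  have h : Ideal.Quotient.mk (kIdeal r s)
      (MvPolynomial.X i ^ 2 - MvPolynomial.C (if (i : ℕ) < r then (1 : ℝ) else -1)) = 0 :=
    Ideal.Quotient.eq_zero_iff_mem.2 (Ideal.subset_span ⟨i, rfl⟩)
  rw [map_sub, sub_eq_zero] at h
  have : (Ideal.Quotient.mk (kIdeal r s)) (MvPolynomial.X i) *
      (Ideal.Quotient.mk (kIdeal r s)) (MvPolynomial.X i) =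
      (Ideal.Quotient.mk (kIdeal r s)) (MvPolynomial.C (if (i : ℕ) < r then (1 : ℝ) else -1)) := by
    rw [← _root_.map_mul, ← pow_two, h]
  simp only [xK, Ideal.Quotient.mkₐ_eq_mk]
  exact this

noncomputable def kLift {r s : ℕ} {B : Type*} [CommRing B] [Algebra ℝ B]
    (u : Fin (r + s) → B)
    (hu : ∀ i : Fin (r + s), u i * u i = algebraMap ℝ B (if (i : ℕ) < r then 1 else -1)) :
    (MvPolynomial (Fin (r + s)) ℝ ⧸ kIdeal r s) →ₐ[ℝ] B :=
  Ideal.Quotient.liftₐ (kIdeal r s) (MvPolynomial.aeval u) (by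
    intro a ha
    have hk : kIdeal r s ≤ RingHom.ker (MvPolynomial.aeval (R := ℝ) u) := by
      rw [kIdeal, Ideal.span_le]
      rintro f ⟨i, rfl⟩
      simp [SetLike.mem_coe, RingHom.mem_ker, pow_two, hu i]
    simpa [RingHom.mem_ker] using hk ha)

lemma kLift_xK {r s : ℕ} {B : Type*} [CommRing B] [Algebra ℝ B]
    (u : Fin (r + s) → B) (hu : ∀ i, u i * u i = algebraMap ℝ B (if (i : ℕ) < r then 1 else -1))
    (i : Fin (r + s)) : kLift u hu (xK r s i) = u i := by
  simp [kLift, xK, Ideal.Quotient.liftₐ_apply, Ideal.Quotient.mkₐ_eq_mk, Ideal.Quotient.lift_mk]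
  exact MvPolynomial.aeval_X u i

lemma kAlgHom_ext {r s : ℕ} {B : Type*} [CommRing B] [Algebra ℝ B]
    {f g : (MvPolynomial (Fin (r + s)) ℝ ⧸ kIdeal r s) →ₐ[ℝ] B}
    (h : ∀ i, f (xK r s i) = g (xK r s i)) : f = g :=
  Ideal.Quotient.algHom_ext ℝ (MvPolynomial.algHom_ext fun i => h i)

noncomputable def tpowLift {n : ℕ} {A B : Type*} [CommRing A] [Algebra ℝ A]
    [CommRing B] [Algebra ℝ B] (f : Fin n → (A →ₐ[ℝ] B)) :
    (⨂[ℝ] _ : Fin n, A) →ₐ[ℝ] B :=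
  PiTensorProduct.liftAlgHom
    ((MultilinearMap.mkPiAlgebra ℝ (Fin n) B).compLinearMap (fun i => (f i).toLinearMap))
    (by simp) (by intro x y; simp [Finset.prod_mul_distrib])

lemma tpowLift_single {n : ℕ} {A B : Type*} [CommRing A] [Algebra ℝ A]
    [CommRing B] [Algebra ℝ B] (f : Fin n → (A →ₐ[ℝ] B)) (j : Fin n) (a : A) :
    tpowLift f (PiTensorProduct.singleAlgHom (R := ℝ) (A := fun _ : Fin n => A) j a) = f j a := by
  simp only [tpowLift, PiTensorProduct.singleAlgHom_apply, PiTensorProduct.liftAlgHom, AlgHom.ofLinearMap_apply,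
    PiTensorProduct.lift.tprod, MultilinearMap.compLinearMap_apply,
    MultilinearMap.mkPiAlgebra_apply, AlgHom.toLinearMap_apply]
  rw [Fintype.prod_eq_single j]
  · simp
  · intro i hi
    simp [MonoidHom.mulSingle_apply, Pi.mulSingle, Function.update_of_ne hi]

end Stmt16Aux

namespace Stmt16Aux

noncomputable def prodLift {B : Type*} [CommRing B] [Algebra ℝ B] (v : B) (hv : v * v = 1) :
    (ℝ × ℝ) →ₐ[ℝ] B where
  toFun z := ((z.1 + z.2) / 2) • (1 : B) + ((z.1 - z.2) / 2) • v
  map_one' := by norm_num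
  map_mul' z w := by
    simp only [Prod.fst_mul, Prod.snd_mul]
    rw [add_mul, mul_add, mul_add, smul_mul_smul_comm, smul_mul_smul_comm, smul_mul_smul_comm,
      smul_mul_smul_comm, hv]
    simp only [one_mul, mul_one]
    match_scalars <;> ring
  map_zero' := by norm_num
  map_add' z w := by
    simp only [Prod.fst_add, Prod.snd_add]
    match_scalars <;> ring
  commutes' c := by
    show ((c + c) / 2) • (1 : B) + ((c - c) / 2) • v = _
    rw [Algebra.algebraMap_eq_smul_one]
    match_scalars <;> ring

@[simp] lemma prodLift_e {B : Type*} [CommRing B] [Algebra ℝ B] (v : B) (hv : v * v = 1) :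
    prodLift v hv ((1 : ℝ), (-1 : ℝ)) = v := by
  simp only [prodLift, AlgHom.coe_mk, RingHom.coe_mk, MonoidHom.coe_mk, OneHom.coe_mk]
  norm_num

lemma prodAlgHom_ext {B : Type*} [CommRing B] [Algebra ℝ B] {f g : (ℝ × ℝ) →ₐ[ℝ] B}
    (h : f ((1 : ℝ), (-1 : ℝ)) = g ((1 : ℝ), (-1 : ℝ))) : f = g := by
  ext z
  have hz : z = ((z.1 + z.2) / 2) • (1 : ℝ × ℝ) + ((z.1 - z.2) / 2) • ((1 : ℝ), (-1 : ℝ)) := by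
    refine Prod.ext ?_ ?_ <;> simp <;> ring
  rw [hz, map_add, map_add, map_smul, map_smul, map_smul, map_smul, map_one, map_one, h]

end Stmt16Aux

namespace Stmt16Aux

set_option maxHeartbeats 1000000 in
lemma caseC (r s : ℕ) (hs : 1 ≤ s) :
    Nonempty ((MvPolynomial (Fin (r + s)) ℝ ⧸ kIdeal r s) ≃ₐ[ℝ] (⨂[ℝ] _ : Fin (r + s), ℂ)) := by
  classical
  set L : Fin (r + s) := ⟨r + s - 1, by omega⟩ with hLdef
  have hL : ¬ ((L : ℕ) < r) := by simp only [hLdef]; omega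
  set ι : Fin (r + s) → (ℂ →ₐ[ℝ] (⨂[ℝ] _ : Fin (r + s), ℂ)) :=
    fun j => PiTensorProduct.singleAlgHom (R := ℝ) (A := fun _ : Fin (r + s) => ℂ) j with hι
  have hιsq : ∀ j, ι j Complex.I * ι j Complex.I = -1 := fun j => by
    rw [← _root_.map_mul, Complex.I_mul_I, _root_.map_neg, _root_.map_one]
  set t : Fin (r + s) → (⨂[ℝ] _ : Fin (r + s), ℂ) :=
    fun i => if (i : ℕ) < r then ι i Complex.I * ι L Complex.I else ι i Complex.I with ht
  have htsq : ∀ i, t i * t i = algebraMap ℝ _ (if (i : ℕ) < r then (1 : ℝ) else -1) := by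
    intro i
    by_cases hi : (i : ℕ) < r
    · simp only [ht, if_pos hi]
      rw [_root_.map_one]
      linear_combination (ι L Complex.I * ι L Complex.I) * hιsq i - hιsq L
    · simp only [ht, if_neg hi]
      rw [_root_.map_neg, _root_.map_one]
      exact hιsq i
  set u : Fin (r + s) → (MvPolynomial (Fin (r + s)) ℝ ⧸ kIdeal r s) :=
    fun i => if (i : ℕ) < r then -(xK r s i * xK r s L) else xK r s i with hu
  have hxL : xK r s L * xK r s L = -1 := by
    rw [xK_sq, if_neg hL, _root_.map_neg, _root_.map_one]
  have hxP : ∀ i : Fin (r + s), (i : ℕ) < r → xK r s i * xK r s i = 1 := fun i hi => by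
    rw [xK_sq, if_pos hi, _root_.map_one]
  have husq : ∀ i, u i * u i = -1 := by
    intro i
    by_cases hi : (i : ℕ) < r
    · simp only [hu, if_pos hi]
      linear_combination (xK r s L * xK r s L) * hxP i hi + hxL
    · simp only [hu, if_neg hi]
      rw [xK_sq, if_neg hi, _root_.map_neg, _root_.map_one]
  refine ⟨AlgEquiv.ofAlgHom (kLift t htsq)
    (tpowLift (fun j => Complex.liftAux (u j) (husq j))) ?_ ?_⟩
  · refine PiTensorProduct.algHom_ext fun j => Complex.algHom_ext ?_
    simp only [AlgHom.comp_apply, AlgHom.id_apply]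
    rw [show (PiTensorProduct.singleAlgHom (R := ℝ) (A := fun _ : Fin (r + s) => ℂ) j)
        Complex.I = ι j Complex.I from rfl]
    rw [tpowLift_single, Complex.liftAux_apply_I]
    by_cases hj : (j : ℕ) < r
    · simp only [hu, if_pos hj]
      rw [_root_.map_neg, _root_.map_mul, kLift_xK, kLift_xK]
      simp only [ht, if_pos hj, if_neg hL]
      linear_combination (-(ι j Complex.I)) * hιsq L
    · simp only [hu, if_neg hj]
      rw [kLift_xK]
      simp only [ht, if_neg hj]
  · refine kAlgHom_ext fun i => ?_
    simp only [AlgHom.comp_apply, AlgHom.id_apply]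
    rw [kLift_xK]
    by_cases hi : (i : ℕ) < r
    · simp only [ht, if_pos hi]
      rw [_root_.map_mul, tpowLift_single, tpowLift_single, Complex.liftAux_apply_I,
        Complex.liftAux_apply_I]
      simp only [hu, if_pos hi, if_neg hL]
      linear_combination (-(xK r s i)) * hxL
    · simp only [ht, if_neg hi]
      rw [tpowLift_single, Complex.liftAux_apply_I]
      simp only [hu, if_neg hi]

set_option maxHeartbeats 1000000 in
lemma caseP (r : ℕ) :
    Nonempty ((MvPolynomial (Fin (r + 0)) ℝ ⧸ kIdeal r 0) ≃ₐ[ℝ] (⨂[ℝ] _ : Fin r, (ℝ × ℝ))) := by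
  classical
  have hlt : ∀ i : Fin (r + 0), (i : ℕ) < r := fun i => by have := i.isLt; omega
  set ι : Fin r → ((ℝ × ℝ) →ₐ[ℝ] (⨂[ℝ] _ : Fin r, (ℝ × ℝ))) :=
    fun j => PiTensorProduct.singleAlgHom (R := ℝ) (A := fun _ : Fin r => (ℝ × ℝ)) j with hι
  have he : ((1 : ℝ), (-1 : ℝ)) * ((1 : ℝ), (-1 : ℝ)) = 1 := by
    rw [Prod.mk_mul_mk]; norm_num
  set t : Fin (r + 0) → (⨂[ℝ] _ : Fin r, (ℝ × ℝ)) :=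
    fun i => ι i ((1 : ℝ), (-1 : ℝ)) with ht
  have htsq : ∀ i : Fin (r + 0),
      t i * t i = algebraMap ℝ _ (if (i : ℕ) < r then (1 : ℝ) else -1) := by
    intro i
    rw [if_pos (hlt i), _root_.map_one, ht, ← _root_.map_mul, he, _root_.map_one]
  have hx : ∀ j : Fin (r + 0), xK r 0 j * xK r 0 j = 1 := fun j => by
    rw [xK_sq, if_pos (hlt j), _root_.map_one]
  refine ⟨AlgEquiv.ofAlgHom (kLift t htsq)
    (tpowLift (fun j : Fin r => prodLift (xK r 0 j) (hx j))) ?_ ?_⟩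
  · refine PiTensorProduct.algHom_ext fun j => prodAlgHom_ext ?_
    simp only [AlgHom.comp_apply, AlgHom.id_apply]
    rw [show (PiTensorProduct.singleAlgHom (R := ℝ) (A := fun _ : Fin r => (ℝ × ℝ)) j)
        ((1 : ℝ), (-1 : ℝ)) = ι j ((1 : ℝ), (-1 : ℝ)) from rfl]
    rw [tpowLift_single, prodLift_e, kLift_xK]
  · refine kAlgHom_ext fun i => ?_
    simp only [AlgHom.comp_apply, AlgHom.id_apply]
    rw [kLift_xK]
    simp only [ht]
    rw [tpowLift_single, prodLift_e]

end Stmt16Aux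

theorem stmt16 (r s : ℕ) :
    (1 ≤ s → Nonempty (K r s ≃ₐ[ℝ] tensorPow ℂ (r + s))) ∧
    (s = 0 → Nonempty (K r s ≃ₐ[ℝ] tensorPow (ℝ × ℝ) r)) := by
  constructor
  · intro hs
    exact Stmt16Aux.caseC r s hs
  · intro hs
    subst hs
    exact Stmt16Aux.caseP r
end

section
/- The extended Clifford algebras Cl(4,0|3,18) := K(4,0) ⊗ Cl(3,18) and Cl(5,0|11,9) := K(5,0) ⊗ Cl(11,9) are isomorphic as R-algebras. -/
open scoped TensorProduct Quaternion

noncomputable section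
namespace Aux

variable {A : Type} [Ring A] [Algebra ℝ A]

/-- Linear map sending `m` to `∑ i, m i • f i`. -/
def vmap {n : ℕ} (f : Fin n → A) : (Fin n → ℝ) →ₗ[ℝ] A where
  toFun m := ∑ i, m i • f i
  map_add' x y := by simp [add_smul, Finset.sum_add_distrib]
  map_smul' c x := by simp [Finset.smul_sum, smul_smul]

lemma vmap_apply {n : ℕ} (f : Fin n → A) (m : Fin n → ℝ) :
    vmap f m = ∑ i, m i • f i := rfl

lemma vmap_sq {n : ℕ} (s : Fin n → ℝ) (f : Fin n → A)
    (hsq : ∀ i, f i * f i = algebraMap ℝ A (s i))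
    (hac : ∀ i j, i ≠ j → f i * f j = -(f j * f i)) (m : Fin n → ℝ) :
    vmap f m * vmap f m = algebraMap ℝ A (QuadraticMap.weightedSumSquares ℝ s m) := by
  classical
  set c : Fin n → Fin n → A := fun i j => (m i * m j) • (f i * f j) with hc
  set S : A := ∑ i, ∑ j, c i j with hS
  set T : A := ∑ i, c i i with hT
  have expand : vmap f m * vmap f m = S := by
    rw [vmap_apply, Finset.sum_mul_sum]
    refine Finset.sum_congr rfl fun i _ => Finset.sum_congr rfl fun j _ => ?_
    rw [smul_mul_smul_comm]
  have hskew : ∀ i j, i ≠ j → c i j + c j i = 0 := by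
    intro i j hij
    simp only [hc]
    rw [hac i j hij, mul_comm (m j) (m i)]
    simp
  have key : S + S = T + T := by
    have h1 : S = ∑ i, ∑ j, c j i := Finset.sum_comm
    calc S + S = ∑ i, ((∑ j, c i j) + (∑ j, c j i)) := by
          rw [Finset.sum_add_distrib, ← hS, ← h1]
      _ = ∑ i, ∑ j, (c i j + c j i) := by
          refine Finset.sum_congr rfl fun i _ => ?_
          rw [Finset.sum_add_distrib]
      _ = ∑ i, (c i i + c i i) := by
          refine Finset.sum_congr rfl fun i _ => ?_
          exact Finset.sum_eq_single i (fun j _ hj => hskew i j (Ne.symm hj))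
            (fun h => absurd (Finset.mem_univ i) h)
      _ = T + T := by rw [Finset.sum_add_distrib]
  have hST : S = T := by
    have h2 : (2:ℝ) • S = (2:ℝ) • T := by rw [two_smul, two_smul]; exact key
    calc S = (2:ℝ)⁻¹ • ((2:ℝ) • S) := by rw [smul_smul]; norm_num
      _ = (2:ℝ)⁻¹ • ((2:ℝ) • T) := by rw [h2]
      _ = T := by rw [smul_smul]; norm_num
  rw [expand, hST, QuadraticMap.weightedSumSquares_apply, map_sum]
  refine Finset.sum_congr rfl fun i _ => ?_
  simp only [hc, hsq i, smul_eq_mul]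
  rw [Algebra.smul_def, ← map_mul]
  ring_nf

end Aux
namespace Aux

variable {A : Type} [Ring A] [Algebra ℝ A]

/-- signature weights -/
def sig (p q : ℕ) : Fin (p + q) → ℝ := fun i => if (i : ℕ) < p then 1 else -1

lemma signatureForm_apply (p q : ℕ) (m : Fin (p+q) → ℝ) :
    signatureForm p q m = ∑ i, sig p q i • (m i * m i) :=
  QuadraticMap.weightedSumSquares_apply _ _

/-- the `i`-th standard generator of `Cl p q` -/
def ClGen (p q : ℕ) (i : Fin (p + q)) : Cl p q :=
  CliffordAlgebra.ι (signatureForm p q) (Pi.single i 1)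

lemma sigQ_single (p q : ℕ) (i : Fin (p+q)) :
    signatureForm p q (Pi.single i 1) = sig p q i := by
  rw [signatureForm_apply]
  rw [Finset.sum_eq_single i (fun j _ hj => by simp [Pi.single_apply, hj])
    (fun h => absurd (Finset.mem_univ i) h)]
  simp

lemma ClGen_sq (p q : ℕ) (i : Fin (p+q)) :
    ClGen p q i * ClGen p q i = algebraMap ℝ (Cl p q) (sig p q i) := by
  have h := CliffordAlgebra.ι_sq_scalar (signatureForm p q) (Pi.single i (1:ℝ))
  rw [sigQ_single] at h
  exact h

lemma polar_single (p q : ℕ) {i j : Fin (p+q)} (hij : i ≠ j) :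
    QuadraticMap.polar (signatureForm p q) (Pi.single i 1) (Pi.single j 1) = 0 := by
  classical
  simp only [QuadraticMap.polar, signatureForm_apply, Pi.add_apply]
  rw [← Finset.sum_sub_distrib, ← Finset.sum_sub_distrib]
  refine Finset.sum_eq_zero fun k _ => ?_
  by_cases hki : k = i <;> by_cases hkj : k = j
  · exact absurd (hki ▸ hkj ▸ rfl : i = j) hij
  · simp [hki, Pi.single_apply, Ne.symm hij, hkj]
  · simp [hkj, Pi.single_apply, hij, hki]
  · simp [Pi.single_apply, hki, hkj]

lemma ClGen_anti (p q : ℕ) {i j : Fin (p+q)} (hij : i ≠ j) :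
    ClGen p q i * ClGen p q j = -(ClGen p q j * ClGen p q i) := by
  have h := CliffordAlgebra.ι_mul_ι_add_swap (Q := signatureForm p q)
    (Pi.single i 1) (Pi.single j 1)
  rw [polar_single p q hij, map_zero] at h
  exact eq_neg_of_add_eq_zero_left h

/-- lift to an algebra morphism out of `Cl p q` given generators -/
def ClLift (p q : ℕ) (f : Fin (p+q) → A)
    (hsq : ∀ i, f i * f i = algebraMap ℝ A (sig p q i))
    (hac : ∀ i j, i ≠ j → f i * f j = -(f j * f i)) : Cl p q →ₐ[ℝ] A :=
  CliffordAlgebra.lift (signatureForm p q)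
    ⟨vmap f, fun m => vmap_sq (sig p q) f hsq hac m⟩

lemma ClLift_ι (p q : ℕ) (f : Fin (p+q) → A) (hsq) (hac) (m : Fin (p+q) → ℝ) :
    ClLift p q f hsq hac (CliffordAlgebra.ι (signatureForm p q) m) = ∑ i, m i • f i :=
  CliffordAlgebra.lift_ι_apply _ _ m

lemma ClLift_gen (p q : ℕ) (f : Fin (p+q) → A) (hsq) (hac) (i : Fin (p+q)) :
    ClLift p q f hsq hac (ClGen p q i) = f i := by
  rw [ClGen, ClLift_ι]
  rw [Finset.sum_eq_single i (fun j _ hj => by simp [Pi.single_apply, hj])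
    (fun h => absurd (Finset.mem_univ i) h)]
  simp

lemma ClHom_ext {p q : ℕ} {g₁ g₂ : Cl p q →ₐ[ℝ] A}
    (h : ∀ i, g₁ (ClGen p q i) = g₂ (ClGen p q i)) : g₁ = g₂ := by
  apply CliffordAlgebra.hom_ext
  apply LinearMap.ext; intro m
  have hm : m = ∑ i, m i • (Pi.single i (1:ℝ) : Fin (p+q) → ℝ) := by
    ext j
    rw [Finset.sum_apply]
    rw [Finset.sum_eq_single j (fun i _ hi => by simp [Pi.single_apply, hi])
      (fun hh => absurd (Finset.mem_univ j) hh)]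
    simp
  have key : ∀ (g : Cl p q →ₐ[ℝ] A), g (CliffordAlgebra.ι (signatureForm p q) m)
      = ∑ i, m i • g (ClGen p q i) := by
    intro g
    conv_lhs => rw [hm]
    rw [map_sum]
    exact (map_sum g _ _).trans (Finset.sum_congr rfl fun i _ => by
      rw [map_smul]; exact map_smul g (m i) (ClGen p q i))
  exact (key g₁).trans ((Finset.sum_congr rfl (fun i _ => by rw [h i])).trans (key g₂).symm)

end Aux
set_option linter.unusedSectionVars false
namespace Aux

variable {A : Type} [Ring A] [Algebra ℝ A]

lemma neg_one_pow_sq (k : ℕ) : ((-1:ℝ)^k) * ((-1:ℝ)^k) = 1 := by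
  rw [← pow_add]
  exact Even.neg_one_pow ⟨k, rfl⟩

lemma smul_flip {c : ℝ} (hc : c * c = 1) {x y : A} (h : x = c • y) : y = c • x := by
  rw [h, smul_smul, hc, one_smul]

lemma anticomm_list {g : A} : ∀ {L : List A}, (∀ a ∈ L, g * a = -(a * g)) →
    g * L.prod = ((-1:ℝ) ^ L.length) • (L.prod * g) := by
  intro L
  induction L with
  | nil => intro _; simp
  | cons a T ih =>
    intro h
    have ha := h a List.mem_cons_self
    have hT := ih (fun b hb => h b (List.mem_cons_of_mem a hb))
    simp only [List.prod_cons, List.length_cons]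
    calc g * (a * T.prod) = (g * a) * T.prod := by rw [mul_assoc]
      _ = -((a * g) * T.prod) := by rw [ha, neg_mul]
      _ = -(a * (g * T.prod)) := by rw [mul_assoc]
      _ = -(a * (((-1:ℝ)^T.length) • (T.prod * g))) := by rw [hT]
      _ = ((-1:ℝ)^(T.length+1)) • (a * T.prod * g) := by
          rw [mul_smul_comm, pow_succ, mul_smul, neg_one_smul, smul_neg, mul_assoc]

lemma list_prod_sq : ∀ {L : List A}, (L.Pairwise fun a b => a * b = -(b * a)) →
    L.prod * L.prod = ((-1:ℝ) ^ (L.length.choose 2)) • ((L.map fun a => a * a).prod) := by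
  intro L
  induction L with
  | nil => intro _; simp
  | cons a T ih =>
    intro h
    rw [List.pairwise_cons] at h
    obtain ⟨ha, hT⟩ := h
    have hgl : a * T.prod = ((-1:ℝ)^T.length) • (T.prod * a) :=
      anticomm_list (fun b hb => ha b hb)
    have hgl' : T.prod * a = ((-1:ℝ)^T.length) • (a * T.prod) :=
      smul_flip (neg_one_pow_sq _) hgl
    simp only [List.prod_cons, List.length_cons, List.map_cons]
    calc (a*T.prod)*(a*T.prod) = a * ((T.prod * a) * T.prod) := by
          rw [mul_assoc, mul_assoc]
      _ = a * ((((-1:ℝ)^T.length) • (a * T.prod)) * T.prod) := by rw [hgl']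
      _ = ((-1:ℝ)^T.length) • ((a * a) * (T.prod * T.prod)) := by
          rw [smul_mul_assoc, mul_smul_comm, mul_assoc, mul_assoc]
      _ = ((-1:ℝ)^T.length) • ((a * a) * (((-1:ℝ) ^ (T.length.choose 2)) •
            ((T.map fun a => a * a).prod))) := by rw [ih hT]
      _ = ((-1:ℝ)^((T.length+1).choose 2)) • ((a * a) * (T.map fun a => a * a).prod) := by
          rw [mul_smul_comm, smul_smul, ← pow_add]
          congr 2
          have : (T.length+1).choose 2 = T.length.choose 1 + T.length.choose 2 :=
            Nat.choose_succ_succ _ _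
          rw [this, Nat.choose_one_right]

/-- ordered product of a finite family -/
def prodFn {n : ℕ} (f : Fin n → A) : A := (List.ofFn f).prod

lemma prodFn_succ {n : ℕ} (f : Fin (n+1) → A) :
    prodFn f = f 0 * prodFn (fun i : Fin n => f i.succ) := by
  rw [prodFn, List.ofFn_succ, List.prod_cons]; rfl

lemma prodFn_anticomm {n : ℕ} {f : Fin n → A} {g : A} (h : ∀ i, g * f i = -(f i * g)) :
    g * prodFn f = ((-1:ℝ)^n) • (prodFn f * g) := by
  have := anticomm_list (g := g) (L := List.ofFn f) ?_
  · rwa [List.length_ofFn] at this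
  · intro a ha
    rw [List.mem_ofFn] at ha
    obtain ⟨i, rfl⟩ := ha
    exact h i

lemma prodFn_sq {n : ℕ} (f : Fin n → A) (s : Fin n → ℝ)
    (hsq : ∀ i, f i * f i = algebraMap ℝ A (s i))
    (hac : ∀ i j, i ≠ j → f i * f j = -(f j * f i)) :
    prodFn f * prodFn f = ((-1:ℝ)^(n.choose 2)) • algebraMap ℝ A (∏ i, s i) := by
  have hp : (List.ofFn f).Pairwise fun a b => a * b = -(b * a) := by
    rw [List.pairwise_ofFn]
    intro i j hij
    exact hac i j (Fin.ne_of_lt hij)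
  have h := list_prod_sq hp
  rw [List.length_ofFn] at h
  rw [prodFn, h]
  congr 1
  rw [List.map_ofFn]
  have : (fun a : A => a * a) ∘ f = fun i => algebraMap ℝ A (s i) := by
    funext i; exact hsq i
  rw [this, show (fun i => (algebraMap ℝ A) (s i)) = ⇑(algebraMap ℝ A) ∘ s from rfl,
    ← List.map_ofFn, ← map_list_prod (algebraMap ℝ A), List.prod_ofFn]

lemma prodFn_self_anticomm : ∀ (n : ℕ) (f : Fin (n+1) → A)
    (hac : ∀ i j, i ≠ j → f i * f j = -(f j * f i)) (j : Fin (n+1)),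
    f j * prodFn f = ((-1:ℝ)^n) • (prodFn f * f j) := by
  intro n
  induction n with
  | zero =>
    intro f hac j
    have hj : j = 0 := Fin.ext (by omega)
    subst hj
    simp [prodFn, List.ofFn_succ]
  | succ n ih =>
    intro f hac j
    set P : A := prodFn (fun i : Fin (n+1) => f i.succ) with hP
    have hsplit : prodFn f = f 0 * P := prodFn_succ f
    induction j using Fin.cases with
    | zero =>
      have hout : ∀ i : Fin (n+1), f 0 * f i.succ = -(f i.succ * f 0) :=
        fun i => hac 0 i.succ (Fin.succ_ne_zero i).symm
      have h1 : f 0 * P = ((-1:ℝ)^(n+1)) • (P * f 0) := prodFn_anticomm hout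
      have h1' : P * f 0 = ((-1:ℝ)^(n+1)) • (f 0 * P) := smul_flip (neg_one_pow_sq _) h1
      rw [hsplit]
      calc f 0 * (f 0 * P)
          = (((-1:ℝ)^(n+1)) * ((-1:ℝ)^(n+1))) • (f 0 * (f 0 * P)) := by
            rw [neg_one_pow_sq, one_smul]
        _ = ((-1:ℝ)^(n+1)) • (f 0 * (((-1:ℝ)^(n+1)) • (f 0 * P))) := by
            rw [mul_smul_comm, smul_smul]
        _ = ((-1:ℝ)^(n+1)) • (f 0 * (P * f 0)) := by rw [← h1']
        _ = ((-1:ℝ)^(n+1)) • ((f 0 * P) * f 0) := by rw [mul_assoc]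
    | succ i =>
      have hac' : ∀ a b : Fin (n+1), a ≠ b → (fun k : Fin (n+1) => f k.succ) a *
          (fun k : Fin (n+1) => f k.succ) b
          = -((fun k : Fin (n+1) => f k.succ) b * (fun k : Fin (n+1) => f k.succ) a) :=
        fun a b hab => hac a.succ b.succ (fun h => hab (Fin.succ_injective _ h))
      have ih' : f i.succ * P = ((-1:ℝ)^n) • (P * f i.succ) := ih _ hac' i
      have e1 : f i.succ * f 0 = -(f 0 * f i.succ) := hac _ _ (Fin.succ_ne_zero i)
      rw [hsplit]
      calc f i.succ * (f 0 * P) = (f i.succ * f 0) * P := by rw [mul_assoc]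
        _ = -((f 0 * f i.succ) * P) := by rw [e1, neg_mul]
        _ = -(f 0 * (f i.succ * P)) := by rw [mul_assoc]
        _ = -(f 0 * (((-1:ℝ)^n) • (P * f i.succ))) := by rw [ih']
        _ = ((-1:ℝ)^(n+1)) • ((f 0 * P) * f i.succ) := by
            rw [mul_smul_comm, pow_succ, mul_smul, neg_one_smul, smul_neg, mul_assoc]

end Aux
namespace Aux

open MvPolynomial in
/-- the defining ideal of `K r s` -/
def KIdeal (r s : ℕ) : Ideal (MvPolynomial (Fin (r + s)) ℝ) :=
  Ideal.span {f : MvPolynomial (Fin (r + s)) ℝ | ∃ i : Fin (r + s),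
    f = X i ^ 2 - C (if (i : ℕ) < r then (1 : ℝ) else -1)}

/-- generators of `K r s` -/
def Kgen (r s : ℕ) (i : Fin (r + s)) : K r s :=
  Ideal.Quotient.mk (KIdeal r s) (MvPolynomial.X i)

lemma Kgen_sq (r s : ℕ) (i : Fin (r + s)) :
    Kgen r s i * Kgen r s i
      = algebraMap ℝ (K r s) (if (i : ℕ) < r then (1 : ℝ) else -1) := by
  have hmem : (MvPolynomial.X i ^ 2
      - MvPolynomial.C (if (i : ℕ) < r then (1 : ℝ) else -1)) ∈ KIdeal r s :=
    Ideal.subset_span ⟨i, rfl⟩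
  have h0 : Ideal.Quotient.mk (KIdeal r s) (MvPolynomial.X i ^ 2
      - MvPolynomial.C (if (i : ℕ) < r then (1 : ℝ) else -1)) = 0 :=
    Ideal.Quotient.eq_zero_iff_mem.mpr hmem
  rw [map_sub, sub_eq_zero, map_pow] at h0
  exact (sq (Ideal.Quotient.mk (KIdeal r s) (MvPolynomial.X i))).symm.trans h0

variable {B : Type} [CommRing B] [Algebra ℝ B]
variable {A : Type} [Ring A] [Algebra ℝ A]

lemma liftₐ_mk {R A' B' : Type} [CommRing R] [CommRing A'] [Semiring B'] [Algebra R A']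
    [Algebra R B'] (I : Ideal A') (f : A' →ₐ[R] B') (hI : ∀ a ∈ I, f a = 0) (a : A') :
    Ideal.Quotient.liftₐ I f hI (Ideal.Quotient.mk I a) = f a := by
  rw [Ideal.Quotient.liftₐ_apply]
  rfl

/-- lift out of `K r s` into a commutative algebra -/
def KliftC (r s : ℕ) (u : Fin (r + s) → B)
    (hu : ∀ i, u i * u i = algebraMap ℝ B (if (i : ℕ) < r then (1 : ℝ) else -1)) :
    K r s →ₐ[ℝ] B :=
  Ideal.Quotient.liftₐ (KIdeal r s) (MvPolynomial.aeval u) (by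
    intro a ha
    have hle : KIdeal r s ≤ RingHom.ker (MvPolynomial.aeval u (R := ℝ)).toRingHom := by
      rw [KIdeal, Ideal.span_le]
      rintro f ⟨i, rfl⟩
      simp only [SetLike.mem_coe, RingHom.mem_ker, AlgHom.toRingHom_eq_coe, RingHom.coe_coe,
        map_sub, map_pow, MvPolynomial.aeval_X, MvPolynomial.aeval_C]
      rw [sq, hu i, sub_self]
    exact hle ha)

lemma KliftC_gen (r s : ℕ) (u : Fin (r + s) → B) (hu) (i : Fin (r + s)) :
    KliftC r s u hu (Kgen r s i) = u i := by
  refine Eq.trans (liftₐ_mk _ _ _ _) ?_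
  simp

lemma KHom_ext {r s : ℕ} {g₁ g₂ : K r s →ₐ[ℝ] A}
    (h : ∀ i, g₁ (Kgen r s i) = g₂ (Kgen r s i)) : g₁ = g₂ := by
  apply Ideal.Quotient.algHom_ext (R₁ := ℝ) (I := KIdeal r s)
  apply MvPolynomial.algHom_ext
  intro i
  exact h i

/-- auxiliary map to a possibly noncommutative algebra -/
def K10aux (u : A) : MvPolynomial (Fin (1 + 0)) ℝ →ₐ[ℝ] A :=
  (Polynomial.aeval u).comp
    (((MvPolynomial.pUnitAlgEquiv ℝ).toAlgHom).comp
      (MvPolynomial.rename (fun _ : Fin (1 + 0) => (Unit.unit : Unit))))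

lemma K10aux_X (u : A) (i : Fin (1 + 0)) : K10aux u (MvPolynomial.X i) = u := by
  simp [K10aux]

/-- lift out of `K 1 0` into a possibly noncommutative algebra -/
def K10lift (u : A) (hu : u * u = 1) : K 1 0 →ₐ[ℝ] A :=
  Ideal.Quotient.liftₐ (KIdeal 1 0) (K10aux u)
    (by
      intro a ha
      have hle : KIdeal 1 0 ≤ RingHom.ker (K10aux u).toRingHom := by
        rw [KIdeal, Ideal.span_le]
        rintro f ⟨i, rfl⟩
        have hi : (i : ℕ) < 1 := by omega
        simp only [SetLike.mem_coe, RingHom.mem_ker, AlgHom.toRingHom_eq_coe, RingHom.coe_coe,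
          map_sub, map_pow, K10aux_X, hi, if_pos]
        have : K10aux u (MvPolynomial.C (1:ℝ)) = 1 := by simp [K10aux]
        rw [this, sq, hu, sub_self]
      exact hle ha)

lemma K10lift_gen (u : A) (hu : u * u = 1) (i : Fin (1 + 0)) :
    K10lift u hu (Kgen 1 0 i) = u := by
  refine Eq.trans (liftₐ_mk _ _ _ _) ?_
  exact K10aux_X u i

lemma K10lift_commute (u : A) (hu : u * u = 1) {z : A} (hz : Commute u z) :
    ∀ x, Commute (K10lift u hu x) z := by
  intro x
  have hsurj : Function.Surjective
      (fun p : MvPolynomial (Fin (1+0)) ℝ => (Ideal.Quotient.mk (KIdeal 1 0) p : K 1 0)) :=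
    Ideal.Quotient.mk_surjective
  obtain ⟨p, rfl⟩ := hsurj x
  simp only []
  induction p using MvPolynomial.induction_on with
  | C r =>
    have : K10lift u hu (Ideal.Quotient.mk (KIdeal 1 0) (MvPolynomial.C r))
        = algebraMap ℝ A r := by
      refine Eq.trans (liftₐ_mk _ _ _ _) ?_
      simp [K10aux]
    rw [this]
    exact Algebra.commute_algebraMap_left r z
  | add p q hp hq =>
    rw [map_add, show K10lift u hu ((Ideal.Quotient.mk (KIdeal 1 0) p) + Ideal.Quotient.mk (KIdeal 1 0) q) = K10lift u hu (Ideal.Quotient.mk (KIdeal 1 0) p) + K10lift u hu (Ideal.Quotient.mk (KIdeal 1 0) q) from map_add _ _ _]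
    exact hp.add_left hq
  | mul_X p i hp =>
    rw [map_mul, show K10lift u hu ((Ideal.Quotient.mk (KIdeal 1 0) p) * Ideal.Quotient.mk (KIdeal 1 0) (MvPolynomial.X i)) = K10lift u hu (Ideal.Quotient.mk (KIdeal 1 0) p) * K10lift u hu (Ideal.Quotient.mk (KIdeal 1 0) (MvPolynomial.X i)) from map_mul _ _ _]
    have : K10lift u hu (Ideal.Quotient.mk (KIdeal 1 0) (MvPolynomial.X i)) = u :=
      K10lift_gen u hu i
    rw [this]
    exact hp.mul_left hz

end Aux
namespace Aux

variable {A : Type} [Ring A] [Algebra ℝ A]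

lemma sig_apply (p q : ℕ) (i : Fin (p+q)) : sig p q i = if (i:ℕ) < p then 1 else -1 := rfl

lemma sig_mk (p q m : ℕ) (h : m < p + q) :
    sig p q ⟨m, h⟩ = if m < p then 1 else -1 := rfl

lemma neg_flip {x y : A} (h : x = -y) : y = -x := by rw [h, neg_neg]

lemma sandwich {b u w : A} (hb : b * b = 1) (hu : u * b = -(b * u)) :
    (b * u) * (b * w) = -(u * w) := by
  calc (b * u) * (b * w) = b * ((u * b) * w) := by
        rw [mul_assoc, ← mul_assoc u b w]
    _ = -(b * ((b * u) * w)) := by rw [hu, neg_mul, mul_neg]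
    _ = -(((b * b) * u) * w) := by rw [← mul_assoc, ← mul_assoc]
    _ = -(u * w) := by rw [hb, one_mul]

lemma halfconj {e x y : A} (hcomm : y * e = e * y) (hxy : x * y = -(y * x)) :
    (e * x) * y = -(y * (e * x)) := by
  calc (e * x) * y = e * (x * y) := mul_assoc _ _ _
    _ = -((e * y) * x) := by rw [hxy, mul_neg, mul_assoc]
    _ = -((y * e) * x) := by rw [hcomm]
    _ = -(y * (e * x)) := by rw [mul_assoc]

lemma prodFn_four (f : Fin 4 → A) : prodFn f = f 0 * (f 1 * (f 2 * f 3)) := by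
  have h : (Fin.succ 2 : Fin 4) = 3 := by decide
  simp [prodFn, List.ofFn_succ, h]

lemma four_prod_trick {b : A} {x : Fin 4 → A} (hb : b * b = 1)
    (hx : ∀ k, x k * b = -(b * x k)) :
    prodFn (fun k => b * x k) = prodFn x := by
  rw [prodFn_four, prodFn_four]
  beta_reduce
  calc (b*x 0)*((b*x 1)*((b*x 2)*(b*x 3)))
      = ((b*x 0)*(b*x 1))*((b*x 2)*(b*x 3)) := (mul_assoc _ _ _).symm
    _ = (-(x 0*x 1))*(-(x 2*x 3)) := by rw [sandwich hb (hx 0), sandwich hb (hx 2)]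
    _ = (x 0*x 1)*(x 2*x 3) := neg_mul_neg _ _
    _ = x 0*(x 1*(x 2*x 3)) := mul_assoc _ _ _

lemma map_prodFn {B : Type} [Ring B] [Algebra ℝ B] (g : A →ₐ[ℝ] B) {n : ℕ}
    (f : Fin n → A) : g (prodFn f) = prodFn (fun i => g (f i)) := by
  rw [prodFn, map_list_prod, List.map_ofFn]; rfl

section Flip

variable (a b : ℕ)

/-- the product of the four source generators to be flipped -/
def aElt : Cl (a+4) b := prodFn (fun k : Fin 4 => ClGen (a+4) b ⟨a+k.val, by omega⟩)

/-- the product of the four target generators to be flipped -/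
def bElt : Cl a (b+4) := prodFn (fun k : Fin 4 => ClGen a (b+4) ⟨a+k.val, by omega⟩)

lemma famA_anti : ∀ k l : Fin 4, k ≠ l →
    ClGen (a+4) b ⟨a+k.val, by omega⟩ * ClGen (a+4) b ⟨a+l.val, by omega⟩
      = -(ClGen (a+4) b ⟨a+l.val, by omega⟩ * ClGen (a+4) b ⟨a+k.val, by omega⟩) := by
  intro k l hkl
  refine ClGen_anti _ _ ?_
  intro hh
  have : a + (k:ℕ) = a + (l:ℕ) := congrArg Fin.val hh
  exact hkl (Fin.ext (by omega))

lemma famB_anti : ∀ k l : Fin 4, k ≠ l →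
    ClGen a (b+4) ⟨a+k.val, by omega⟩ * ClGen a (b+4) ⟨a+l.val, by omega⟩
      = -(ClGen a (b+4) ⟨a+l.val, by omega⟩ * ClGen a (b+4) ⟨a+k.val, by omega⟩) := by
  intro k l hkl
  refine ClGen_anti _ _ ?_
  intro hh
  have : a + (k:ℕ) = a + (l:ℕ) := congrArg Fin.val hh
  exact hkl (Fin.ext (by omega))

lemma aElt_sq : aElt a b * aElt a b = 1 := by
  have h := prodFn_sq (fun k : Fin 4 => ClGen (a+4) b ⟨a+k.val, by omega⟩)
    (fun k => sig (a+4) b ⟨a+k.val, by omega⟩)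
    (fun k => ClGen_sq _ _ _) (famA_anti a b)
  rw [aElt, h]
  have h2 : ∀ k : Fin 4, a + (k:ℕ) < a + 4 := fun k => by omega
  simp [sig_mk, h2, Nat.choose]
  norm_num

lemma bElt_sq : bElt a b * bElt a b = 1 := by
  have h := prodFn_sq (fun k : Fin 4 => ClGen a (b+4) ⟨a+k.val, by omega⟩)
    (fun k => sig a (b+4) ⟨a+k.val, by omega⟩)
    (fun k => ClGen_sq _ _ _) (famB_anti a b)
  rw [bElt, h]
  have h2 : ∀ k : Fin 4, ¬(a + (k:ℕ) < a) := fun k => by omega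
  simp [sig_mk, h2, Nat.choose]
  norm_num

lemma aElt_anti {j : Fin ((a+4)+b)} (hj : a ≤ (j:ℕ) ∧ (j:ℕ) < a+4) :
    ClGen (a+4) b j * aElt a b = -(aElt a b * ClGen (a+4) b j) := by
  have h := prodFn_self_anticomm 3
    (fun k : Fin 4 => ClGen (a+4) b ⟨a+k.val, by omega⟩) (famA_anti a b)
    ⟨(j:ℕ)-a, by omega⟩
  beta_reduce at h
  have hj' : (⟨a + ((j:ℕ)-a), by omega⟩ : Fin ((a+4)+b)) = j :=
    Fin.ext (show a + ((j:ℕ)-a) = (j:ℕ) by omega)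
  rw [hj'] at h
  rw [aElt, h]
  norm_num

lemma aElt_comm {j : Fin ((a+4)+b)} (hj : ¬(a ≤ (j:ℕ) ∧ (j:ℕ) < a+4)) :
    ClGen (a+4) b j * aElt a b = aElt a b * ClGen (a+4) b j := by
  have h := prodFn_anticomm (n := 4) (g := ClGen (a+4) b j)
    (f := fun k : Fin 4 => ClGen (a+4) b ⟨a+k.val, by omega⟩) (fun k =>
      ClGen_anti _ _ (fun hh => by
        have : (j:ℕ) = a + (k:ℕ) := congrArg Fin.val hh
        omega))
  rw [aElt, h]
  norm_num

lemma bElt_anti {j : Fin (a+(b+4))} (hj : a ≤ (j:ℕ) ∧ (j:ℕ) < a+4) :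
    ClGen a (b+4) j * bElt a b = -(bElt a b * ClGen a (b+4) j) := by
  have h := prodFn_self_anticomm 3
    (fun k : Fin 4 => ClGen a (b+4) ⟨a+k.val, by omega⟩) (famB_anti a b)
    ⟨(j:ℕ)-a, by omega⟩
  beta_reduce at h
  have hj' : (⟨a + ((j:ℕ)-a), by omega⟩ : Fin (a+(b+4))) = j :=
    Fin.ext (show a + ((j:ℕ)-a) = (j:ℕ) by omega)
  rw [hj'] at h
  rw [bElt, h]
  norm_num

lemma bElt_comm {j : Fin (a+(b+4))} (hj : ¬(a ≤ (j:ℕ) ∧ (j:ℕ) < a+4)) :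
    ClGen a (b+4) j * bElt a b = bElt a b * ClGen a (b+4) j := by
  have h := prodFn_anticomm (n := 4) (g := ClGen a (b+4) j)
    (f := fun k : Fin 4 => ClGen a (b+4) ⟨a+k.val, by omega⟩) (fun k =>
      ClGen_anti _ _ (fun hh => by
        have : (j:ℕ) = a + (k:ℕ) := congrArg Fin.val hh
        omega))
  rw [bElt, h]
  norm_num

/-- candidate generators of `Cl a (b+4)` inside `Cl (a+4) b` -/
def wGen : Fin (a+(b+4)) → Cl (a+4) b := fun i =>
  if a ≤ (i:ℕ) ∧ (i:ℕ) < a+4 then aElt a b * ClGen (a+4) b ⟨i, by omega⟩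
  else ClGen (a+4) b ⟨i, by omega⟩

/-- candidate generators of `Cl (a+4) b` inside `Cl a (b+4)` -/
def wGen' : Fin ((a+4)+b) → Cl a (b+4) := fun i =>
  if a ≤ (i:ℕ) ∧ (i:ℕ) < a+4 then bElt a b * ClGen a (b+4) ⟨i, by omega⟩
  else ClGen a (b+4) ⟨i, by omega⟩

lemma wGen_sq (i : Fin (a+(b+4))) :
    wGen a b i * wGen a b i = algebraMap ℝ _ (sig a (b+4) i) := by
  rw [wGen]
  split_ifs with h
  · rw [sandwich (aElt_sq a b)
      (aElt_anti a b (j := ⟨(i:ℕ), by omega⟩) (show a ≤ (i:ℕ) ∧ (i:ℕ) < a+4 from h)),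
      ClGen_sq, sig_mk, if_pos (show (i:ℕ) < a+4 by omega),
      sig_apply, if_neg (show ¬((i:ℕ) < a) by omega)]
    simp
  · rw [ClGen_sq]
    congr 1
    rw [sig_mk, sig_apply]
    split_ifs with h1 h2 <;> first | rfl | (exfalso; omega)

lemma wGen'_sq (i : Fin ((a+4)+b)) :
    wGen' a b i * wGen' a b i = algebraMap ℝ _ (sig (a+4) b i) := by
  rw [wGen']
  split_ifs with h
  · rw [sandwich (bElt_sq a b)
      (bElt_anti a b (j := ⟨(i:ℕ), by omega⟩) (show a ≤ (i:ℕ) ∧ (i:ℕ) < a+4 from h)),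
      ClGen_sq, sig_mk, if_neg (show ¬((i:ℕ) < a) by omega),
      sig_apply, if_pos (show (i:ℕ) < a+4 by omega)]
    simp
  · rw [ClGen_sq]
    congr 1
    rw [sig_mk, sig_apply]
    split_ifs with h1 h2 <;> first | rfl | (exfalso; omega)

lemma wGen_anti {i j : Fin (a+(b+4))} (hij : i ≠ j) :
    wGen a b i * wGen a b j = -(wGen a b j * wGen a b i) := by
  have hvij : ClGen (a+4) b ⟨(i:ℕ), by omega⟩ * ClGen (a+4) b ⟨(j:ℕ), by omega⟩
      = -(ClGen (a+4) b ⟨(j:ℕ), by omega⟩ * ClGen (a+4) b ⟨(i:ℕ), by omega⟩) :=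
    ClGen_anti _ _ (fun hh => hij (by have h2 := congrArg Fin.val hh; exact Fin.ext h2))
  simp only [wGen]
  split_ifs with hi hj hj
  · rw [sandwich (aElt_sq a b)
      (aElt_anti a b (j := ⟨(i:ℕ), by omega⟩) (show a ≤ (i:ℕ) ∧ (i:ℕ) < a+4 from hi)),
      sandwich (aElt_sq a b)
      (aElt_anti a b (j := ⟨(j:ℕ), by omega⟩) (show a ≤ (j:ℕ) ∧ (j:ℕ) < a+4 from hj)),
      hvij, neg_neg]
  · exact halfconj (aElt_comm a b (j := ⟨(j:ℕ), by omega⟩)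
      (show ¬(a ≤ (j:ℕ) ∧ (j:ℕ) < a+4) from hj)) hvij
  · exact neg_flip (halfconj (aElt_comm a b (j := ⟨(i:ℕ), by omega⟩)
      (show ¬(a ≤ (i:ℕ) ∧ (i:ℕ) < a+4) from hi)) (neg_flip hvij))
  · exact hvij

lemma wGen'_anti {i j : Fin ((a+4)+b)} (hij : i ≠ j) :
    wGen' a b i * wGen' a b j = -(wGen' a b j * wGen' a b i) := by
  have hvij : ClGen a (b+4) ⟨(i:ℕ), by omega⟩ * ClGen a (b+4) ⟨(j:ℕ), by omega⟩
      = -(ClGen a (b+4) ⟨(j:ℕ), by omega⟩ * ClGen a (b+4) ⟨(i:ℕ), by omega⟩) :=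
    ClGen_anti _ _ (fun hh => hij (by have h2 := congrArg Fin.val hh; exact Fin.ext h2))
  simp only [wGen']
  split_ifs with hi hj hj
  · rw [sandwich (bElt_sq a b)
      (bElt_anti a b (j := ⟨(i:ℕ), by omega⟩) (show a ≤ (i:ℕ) ∧ (i:ℕ) < a+4 from hi)),
      sandwich (bElt_sq a b)
      (bElt_anti a b (j := ⟨(j:ℕ), by omega⟩) (show a ≤ (j:ℕ) ∧ (j:ℕ) < a+4 from hj)),
      hvij, neg_neg]
  · exact halfconj (bElt_comm a b (j := ⟨(j:ℕ), by omega⟩)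
      (show ¬(a ≤ (j:ℕ) ∧ (j:ℕ) < a+4) from hj)) hvij
  · exact neg_flip (halfconj (bElt_comm a b (j := ⟨(i:ℕ), by omega⟩)
      (show ¬(a ≤ (i:ℕ) ∧ (i:ℕ) < a+4) from hi)) (neg_flip hvij))
  · exact hvij

/-- forward algebra morphism -/
def flipHom : Cl a (b+4) →ₐ[ℝ] Cl (a+4) b :=
  ClLift a (b+4) (wGen a b) (wGen_sq a b) (fun i j h => wGen_anti a b h)

/-- backward algebra morphism -/
def flipHom' : Cl (a+4) b →ₐ[ℝ] Cl a (b+4) :=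
  ClLift (a+4) b (wGen' a b) (wGen'_sq a b) (fun i j h => wGen'_anti a b h)

lemma flipHom'_aElt : flipHom' a b (aElt a b) = bElt a b := by
  rw [aElt, map_prodFn]
  have h1 : ∀ k : Fin 4, flipHom' a b (ClGen (a+4) b ⟨a+k.val, by omega⟩)
      = bElt a b * ClGen a (b+4) ⟨a+k.val, by omega⟩ := by
    intro k
    rw [flipHom', ClLift_gen, wGen']
    rw [if_pos (show a ≤ a+(k:ℕ) ∧ a+(k:ℕ) < a+4 by omega)]
  rw [show (fun k : Fin 4 => flipHom' a b (ClGen (a+4) b ⟨a+k.val, by omega⟩))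
      = fun k : Fin 4 => bElt a b * ClGen a (b+4) ⟨a+k.val, by omega⟩ from funext h1]
  rw [four_prod_trick (bElt_sq a b) (fun k => bElt_anti a b (j := ⟨a+(k:ℕ), by omega⟩) (show a ≤ a+(k:ℕ) ∧ a+(k:ℕ) < a+4 by omega))]
  rw [bElt]

lemma flipHom_bElt : flipHom a b (bElt a b) = aElt a b := by
  rw [bElt, map_prodFn]
  have h1 : ∀ k : Fin 4, flipHom a b (ClGen a (b+4) ⟨a+k.val, by omega⟩)
      = aElt a b * ClGen (a+4) b ⟨a+k.val, by omega⟩ := by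
    intro k
    rw [flipHom, ClLift_gen, wGen]
    rw [if_pos (show a ≤ a+(k:ℕ) ∧ a+(k:ℕ) < a+4 by omega)]
  rw [show (fun k : Fin 4 => flipHom a b (ClGen a (b+4) ⟨a+k.val, by omega⟩))
      = fun k : Fin 4 => aElt a b * ClGen (a+4) b ⟨a+k.val, by omega⟩ from funext h1]
  rw [four_prod_trick (aElt_sq a b) (fun k => aElt_anti a b (j := ⟨a+(k:ℕ), by omega⟩) (show a ≤ a+(k:ℕ) ∧ a+(k:ℕ) < a+4 by omega))]
  rw [aElt]

/-- the flip equivalence `Cl a (b+4) ≃ Cl (a+4) b` -/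
def flipEquiv : Cl a (b+4) ≃ₐ[ℝ] Cl (a+4) b := by
  refine AlgEquiv.ofAlgHom (flipHom a b) (flipHom' a b) ?_ ?_
  · apply ClHom_ext
    intro i
    rw [AlgHom.comp_apply, AlgHom.id_apply]
    rw [show flipHom' a b (ClGen (a+4) b i) = wGen' a b i from ClLift_gen _ _ _ _ _ _]
    rw [wGen']
    split_ifs with h
    · rw [map_mul, flipHom_bElt]
      rw [show flipHom a b (ClGen a (b+4) ⟨(i:ℕ), by omega⟩) = wGen a b ⟨(i:ℕ), by omega⟩ from
        ClLift_gen _ _ _ _ _ _]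
      rw [wGen, if_pos (show a ≤ (i:ℕ) ∧ (i:ℕ) < a+4 from h)]
      rw [← mul_assoc, aElt_sq, one_mul]
    · rw [show flipHom a b (ClGen a (b+4) ⟨(i:ℕ), by omega⟩) = wGen a b ⟨(i:ℕ), by omega⟩ from
        ClLift_gen _ _ _ _ _ _]
      rw [wGen, if_neg (show ¬(a ≤ (i:ℕ) ∧ (i:ℕ) < a+4) from h)]
  · apply ClHom_ext
    intro i
    rw [AlgHom.comp_apply, AlgHom.id_apply]
    rw [show flipHom a b (ClGen a (b+4) i) = wGen a b i from ClLift_gen _ _ _ _ _ _]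
    rw [wGen]
    split_ifs with h
    · rw [map_mul, flipHom'_aElt]
      rw [show flipHom' a b (ClGen (a+4) b ⟨(i:ℕ), by omega⟩) = wGen' a b ⟨(i:ℕ), by omega⟩ from
        ClLift_gen _ _ _ _ _ _]
      rw [wGen', if_pos (show a ≤ (i:ℕ) ∧ (i:ℕ) < a+4 from h)]
      rw [← mul_assoc, bElt_sq, one_mul]
    · rw [show flipHom' a b (ClGen (a+4) b ⟨(i:ℕ), by omega⟩) = wGen' a b ⟨(i:ℕ), by omega⟩ from
        ClLift_gen _ _ _ _ _ _]
      rw [wGen', if_neg (show ¬(a ≤ (i:ℕ) ∧ (i:ℕ) < a+4) from h)]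

end Flip

end Aux
namespace Aux

variable {A : Type} [Ring A] [Algebra ℝ A]

lemma prodFn_snoc {n : ℕ} (f : Fin (n+1) → A) :
    prodFn f = prodFn (fun i : Fin n => f i.castSucc) * f (Fin.last n) := by
  rw [prodFn, List.ofFn_succ', List.concat_eq_append, List.prod_append, List.prod_cons,
    List.prod_nil, mul_one, prodFn]

lemma ite_prod (N p m : ℕ) (hm : (∑ i : Fin N, if (i:ℕ) < p then 0 else 1) = m) :
    (∏ i : Fin N, (if (i:ℕ) < p then (1:ℝ) else -1)) = (-1:ℝ)^m := by
  rw [← hm, ← Finset.prod_pow_eq_pow_sum]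
  refine Finset.prod_congr rfl fun i _ => ?_
  split_ifs <;> simp

section E3

/-- volume element of `Cl 11 9` -/
def omegaE : Cl 11 9 := prodFn (ClGen 11 9)

/-- volume element of `Cl 11 10` -/
def omega' : Cl 11 10 := prodFn (ClGen 11 10)

lemma prod_sig119 : (∏ i : Fin (11+9), sig 11 9 i) = -1 := by
  have h : (∏ i : Fin (11+9), sig 11 9 i)
      = ∏ i : Fin (11+9), (if (i:ℕ) < 11 then (1:ℝ) else -1) := rfl
  rw [h, ite_prod (11+9) 11 9 (by decide)]
  norm_num

lemma prod_sig1110 : (∏ i : Fin (11+10), sig 11 10 i) = 1 := by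
  have h : (∏ i : Fin (11+10), sig 11 10 i)
      = ∏ i : Fin (11+10), (if (i:ℕ) < 11 then (1:ℝ) else -1) := rfl
  rw [h, ite_prod (11+10) 11 10 (by decide)]
  norm_num

lemma omegaE_sq : omegaE * omegaE = algebraMap ℝ (Cl 11 9) (-1) := by
  have h := prodFn_sq (ClGen 11 9) (sig 11 9)
    (fun i => ClGen_sq _ _ i) (fun i j hij => ClGen_anti _ _ hij)
  rw [omegaE, h, prod_sig119]
  rw [show Nat.choose (11+9) 2 = 190 by decide]
  norm_num

lemma omega'_sq : omega' * omega' = 1 := by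
  have h := prodFn_sq (ClGen 11 10) (sig 11 10)
    (fun i => ClGen_sq _ _ i) (fun i j hij => ClGen_anti _ _ hij)
  rw [omega', h, prod_sig1110]
  rw [show Nat.choose (11+10) 2 = 210 by decide]
  norm_num

lemma omegaE_anti (j : Fin (11+9)) :
    ClGen 11 9 j * omegaE = -(omegaE * ClGen 11 9 j) := by
  have h := prodFn_self_anticomm 19 (ClGen 11 9) (fun i j hij => ClGen_anti _ _ hij) j
  rw [omegaE, h]
  norm_num

lemma omega'_comm (j : Fin (11+10)) :
    ClGen 11 10 j * omega' = omega' * ClGen 11 10 j := by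
  have h := prodFn_self_anticomm 20 (ClGen 11 10) (fun i j hij => ClGen_anti _ _ hij) j
  rw [omega', h]
  norm_num

/-- candidate generators of `Cl 11 10` inside `K 1 0 ⊗ Cl 11 9` -/
def fGen : Fin (11+10) → K 1 0 ⊗[ℝ] Cl 11 9 := fun i =>
  if h : (i:ℕ) < 11+9 then (1 : K 1 0) ⊗ₜ[ℝ] ClGen 11 9 ⟨i, h⟩
  else (Kgen 1 0 ⟨0, by omega⟩) ⊗ₜ[ℝ] omegaE

lemma tmul_one_alg (r : ℝ) :
    (1 : K 1 0) ⊗ₜ[ℝ] (algebraMap ℝ (Cl 11 9) r) = algebraMap ℝ (K 1 0 ⊗[ℝ] Cl 11 9) r := by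
  rw [Algebra.algebraMap_eq_smul_one r (A := Cl 11 9), TensorProduct.tmul_smul,
    Algebra.algebraMap_eq_smul_one r (A := K 1 0 ⊗[ℝ] Cl 11 9), Algebra.TensorProduct.one_def]

lemma Kgen10_sq : Kgen 1 0 ⟨0, by omega⟩ * Kgen 1 0 ⟨0, by omega⟩ = 1 := by
  rw [Kgen_sq, if_pos (show (0:ℕ) < 1 by omega), map_one]

lemma fGen_sq (i : Fin (11+10)) :
    fGen i * fGen i = algebraMap ℝ (K 1 0 ⊗[ℝ] Cl 11 9) (sig 11 10 i) := by
  rw [fGen]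
  split_ifs with h
  · rw [Algebra.TensorProduct.tmul_mul_tmul, one_mul, ClGen_sq, tmul_one_alg]
    rfl
  · rw [Algebra.TensorProduct.tmul_mul_tmul, Kgen10_sq, omegaE_sq, tmul_one_alg,
      sig_apply, if_neg (show ¬((i:ℕ) < 11) by omega)]

lemma fGen_anti {i j : Fin (11+10)} (hij : i ≠ j) :
    fGen i * fGen j = -(fGen j * fGen i) := by
  simp only [fGen]
  split_ifs with h1 h2 h2
  · have hne : (⟨(i:ℕ), h1⟩ : Fin (11+9)) ≠ ⟨(j:ℕ), h2⟩ := by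
      intro hh
      exact hij (by have h3 := congrArg Fin.val hh; exact Fin.ext h3)
    rw [Algebra.TensorProduct.tmul_mul_tmul, Algebra.TensorProduct.tmul_mul_tmul,
      one_mul, ClGen_anti _ _ hne, TensorProduct.tmul_neg]
  · rw [Algebra.TensorProduct.tmul_mul_tmul, Algebra.TensorProduct.tmul_mul_tmul,
      one_mul, mul_one, omegaE_anti, TensorProduct.tmul_neg]
  · refine neg_flip ?_
    rw [Algebra.TensorProduct.tmul_mul_tmul, Algebra.TensorProduct.tmul_mul_tmul,
      one_mul, mul_one, omegaE_anti, TensorProduct.tmul_neg]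
  · exact absurd (Fin.ext (by omega)) hij

/-- forward map -/
def phi3 : Cl 11 10 →ₐ[ℝ] K 1 0 ⊗[ℝ] Cl 11 9 :=
  ClLift 11 10 fGen fGen_sq (fun i j h => fGen_anti h)

/-- generators of `Cl 11 9` inside `Cl 11 10` -/
def gGen : Fin (11+9) → Cl 11 10 := fun k => ClGen 11 10 ⟨k, by omega⟩

lemma gGen_sq (k : Fin (11+9)) : gGen k * gGen k = algebraMap ℝ (Cl 11 10) (sig 11 9 k) :=
  ClGen_sq 11 10 ⟨k, by omega⟩

lemma gGen_anti {k l : Fin (11+9)} (h : k ≠ l) : gGen k * gGen l = -(gGen l * gGen k) :=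
  ClGen_anti 11 10 (fun hh => h (by have h3 := congrArg Fin.val hh; exact Fin.ext h3))

/-- map `Cl 11 9 → Cl 11 10` -/
def gamma3 : Cl 11 9 →ₐ[ℝ] Cl 11 10 :=
  ClLift 11 9 gGen gGen_sq (fun i j h => gGen_anti h)

/-- the central element -/
def uElt : Cl 11 10 := -omega'

lemma uElt_sq : uElt * uElt = 1 := by rw [uElt, neg_mul_neg, omega'_sq]

/-- map `K 1 0 → Cl 11 10` -/
def kappa3 : K 1 0 →ₐ[ℝ] Cl 11 10 := K10lift uElt uElt_sq

lemma hyomega : ∀ y : Cl 11 9, Commute omega' (gamma3 y) := by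
  intro y
  induction y using CliffordAlgebra.induction with
  | algebraMap r =>
    have heq : gamma3 (algebraMap ℝ (CliffordAlgebra (signatureForm 11 9)) r)
        = algebraMap ℝ (Cl 11 10) r := AlgHom.commutes gamma3 r
    rw [heq]
    exact Algebra.commute_algebraMap_right r _
  | ι m =>
    rw [show gamma3 (CliffordAlgebra.ι (signatureForm 11 9) m) = ∑ k, m k • gGen k from
      ClLift_ι _ _ _ _ _ m]
    refine Commute.sum_right _ _ _ (fun k _ => ?_)
    exact Commute.smul_right (show Commute omega' (ClGen 11 10 ⟨k, by omega⟩) from (omega'_comm _).symm) (m k)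
  | mul x y hx hy => rw [show gamma3 (x * y) = gamma3 x * gamma3 y from map_mul gamma3 x y]; exact hx.mul_right hy
  | add x y hx hy => rw [show gamma3 (x + y) = gamma3 x + gamma3 y from map_add gamma3 x y]; exact hx.add_right hy

lemma hcomm3 : ∀ x y, Commute (kappa3 x) (gamma3 y) := by
  intro x y
  exact K10lift_commute uElt uElt_sq ((hyomega y).neg_left) x

/-- backward map -/
def psi3 : K 1 0 ⊗[ℝ] Cl 11 9 →ₐ[ℝ] Cl 11 10 :=
  Algebra.TensorProduct.lift kappa3 gamma3 hcomm3

lemma gamma3_gen (k : Fin (11+9)) : gamma3 (ClGen 11 9 k) = gGen k :=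
  ClLift_gen _ _ _ _ _ k

lemma phi3_gen (j : Fin (11+10)) : phi3 (ClGen 11 10 j) = fGen j :=
  ClLift_gen _ _ _ _ _ j

/-- truncated product -/
def P20 : Cl 11 10 := prodFn gGen

lemma gamma3_omegaE : gamma3 omegaE = P20 := by
  rw [omegaE, map_prodFn, P20]
  exact congrArg prodFn (funext fun k => gamma3_gen k)

lemma omega'_split : omega' = P20 * ClGen 11 10 ⟨20, by omega⟩ := by
  rw [omega', prodFn_snoc (n := 20) (ClGen 11 10), P20]
  congr 1

lemma g20_comm : ClGen 11 10 ⟨20, by omega⟩ * P20 = P20 * ClGen 11 10 ⟨20, by omega⟩ := by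
  have h := prodFn_anticomm (n := 11+9) (g := ClGen 11 10 ⟨20, by omega⟩) (f := gGen)
    (fun k => ClGen_anti _ _ (fun hh => by
      have h3 := congrArg Fin.val hh
      simp only [] at h3
      omega))
  rw [P20, h]
  norm_num

lemma P20_sq : P20 * P20 = algebraMap ℝ (Cl 11 10) (-1) := by
  have h := prodFn_sq gGen (sig 11 9) gGen_sq (fun i j hij => gGen_anti hij)
  rw [P20, h, prod_sig119]
  rw [show Nat.choose (11+9) 2 = 190 by decide]
  norm_num

lemma uElt_P20 : uElt * P20 = ClGen 11 10 ⟨20, by omega⟩ := by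
  rw [uElt, omega'_split, neg_mul, mul_assoc, g20_comm, ← mul_assoc, P20_sq]
  simp

end E3

end Aux
namespace Aux

lemma phi3_omega' : phi3 omega' = -((Kgen 1 0 ⟨0, by omega⟩) ⊗ₜ[ℝ] (1 : Cl 11 9)) := by
  rw [omega', map_prodFn]
  rw [show (fun j => phi3 (ClGen 11 10 j)) = fGen from funext phi3_gen]
  rw [prodFn_snoc (n := 20) fGen]
  rw [show (fun k : Fin 20 => fGen k.castSucc)
      = (fun k : Fin 20 => (1:K 1 0) ⊗ₜ[ℝ] ClGen 11 9 ⟨(k:ℕ), by omega⟩) from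
    funext fun k => dif_pos k.isLt]
  have h3 : prodFn (fun k : Fin 20 => (1:K 1 0) ⊗ₜ[ℝ] ClGen 11 9 ⟨(k:ℕ), by omega⟩)
      = (1:K 1 0) ⊗ₜ[ℝ] omegaE := by
    have h4 : (fun k : Fin 20 => (1:K 1 0) ⊗ₜ[ℝ] ClGen 11 9 ⟨(k:ℕ), by omega⟩)
        = fun k : Fin 20 => (Algebra.TensorProduct.includeRight :
            Cl 11 9 →ₐ[ℝ] K 1 0 ⊗[ℝ] Cl 11 9) (ClGen 11 9 ⟨(k:ℕ), by omega⟩) := rfl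
    rw [h4, ← map_prodFn]
    rfl
  rw [h3]
  rw [show fGen (Fin.last 20) = (Kgen 1 0 ⟨0, by omega⟩) ⊗ₜ[ℝ] omegaE from
    dif_neg (by decide)]
  rw [Algebra.TensorProduct.tmul_mul_tmul, one_mul, omegaE_sq, map_neg, map_one,
    TensorProduct.tmul_neg]

lemma kappa3_gen (i : Fin (1+0)) : kappa3 (Kgen 1 0 i) = uElt :=
  K10lift_gen uElt uElt_sq i

/-- the middle equivalence `Cl 11 10 ≃ K 1 0 ⊗ Cl 11 9` -/
def E3 : Cl 11 10 ≃ₐ[ℝ] K 1 0 ⊗[ℝ] Cl 11 9 := by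
  refine AlgEquiv.ofAlgHom phi3 psi3 ?_ ?_
  · refine Algebra.TensorProduct.ext ?_ ?_
    · apply KHom_ext
      intro i
      simp only [AlgHom.comp_apply, AlgHom.id_apply, Algebra.TensorProduct.includeLeft_apply]
      rw [show psi3 ((Kgen 1 0 i) ⊗ₜ[ℝ] (1 : Cl 11 9)) = kappa3 (Kgen 1 0 i) * gamma3 1 from
        Algebra.TensorProduct.lift_tmul _ _ _ _ _]
      rw [map_one, mul_one, kappa3_gen, uElt, map_neg, phi3_omega', neg_neg]
      have hi : i = ⟨0, by omega⟩ := Fin.ext (show (i:ℕ) = 0 by omega)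
      rw [hi]
    · apply ClHom_ext
      intro k
      simp only [AlgHom.restrictScalars_apply, AlgHom.comp_apply, AlgHom.id_apply,
        Algebra.TensorProduct.includeRight_apply]
      rw [show psi3 ((1 : K 1 0) ⊗ₜ[ℝ] (ClGen 11 9 k)) = kappa3 1 * gamma3 (ClGen 11 9 k) from
        Algebra.TensorProduct.lift_tmul _ _ _ _ _]
      rw [map_one, one_mul, gamma3_gen]
      rw [show phi3 (gGen k) = fGen ⟨(k:ℕ), by omega⟩ from phi3_gen _]
      rw [show fGen ⟨(k:ℕ), by omega⟩ = (1:K 1 0) ⊗ₜ[ℝ] ClGen 11 9 ⟨(k:ℕ), by omega⟩ from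
        dif_pos k.isLt]
  · apply ClHom_ext
    intro i
    rw [AlgHom.comp_apply, AlgHom.id_apply, phi3_gen]
    by_cases h : (i:ℕ) < 11+9
    · rw [show fGen i = (1:K 1 0) ⊗ₜ[ℝ] ClGen 11 9 ⟨(i:ℕ), h⟩ from dif_pos h]
      rw [show psi3 ((1 : K 1 0) ⊗ₜ[ℝ] (ClGen 11 9 ⟨(i:ℕ), h⟩))
          = kappa3 1 * gamma3 (ClGen 11 9 ⟨(i:ℕ), h⟩) from
        Algebra.TensorProduct.lift_tmul _ _ _ _ _]
      rw [map_one, one_mul, gamma3_gen]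
      rfl
    · rw [show fGen i = (Kgen 1 0 ⟨0, by omega⟩) ⊗ₜ[ℝ] omegaE from dif_neg h]
      rw [show psi3 ((Kgen 1 0 ⟨0, by omega⟩) ⊗ₜ[ℝ] omegaE)
          = kappa3 (Kgen 1 0 ⟨0, by omega⟩) * gamma3 omegaE from
        Algebra.TensorProduct.lift_tmul _ _ _ _ _]
      rw [kappa3_gen, gamma3_omegaE, uElt_P20]
      have hi : i = ⟨20, by omega⟩ := Fin.ext (show (i:ℕ) = 20 by omega)
      rw [hi]

end Aux
namespace Aux

lemma Kgen_sq_one (r : ℕ) (i : Fin (r+0)) : Kgen r 0 i * Kgen r 0 i = 1 := by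
  rw [Kgen_sq, if_pos (show (i:ℕ) < r by omega), map_one]

/-- candidate generators of `K 5 0` inside `K 4 0 ⊗ K 1 0` -/
def uuGen : Fin (5+0) → K 4 0 ⊗[ℝ] K 1 0 := fun i =>
  if h : (i:ℕ) < 4 then (Kgen 4 0 ⟨(i:ℕ), by omega⟩) ⊗ₜ[ℝ] (1 : K 1 0)
  else (1 : K 4 0) ⊗ₜ[ℝ] (Kgen 1 0 ⟨0, by omega⟩)

lemma uuGen_sq (i : Fin (5+0)) :
    uuGen i * uuGen i = algebraMap ℝ (K 4 0 ⊗[ℝ] K 1 0) (if (i:ℕ) < 5 then 1 else -1) := by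
  rw [if_pos (show (i:ℕ) < 5 by omega), map_one, uuGen]
  split_ifs with h
  · rw [Algebra.TensorProduct.tmul_mul_tmul, mul_one, Kgen_sq_one,
      ← Algebra.TensorProduct.one_def]
  · rw [Algebra.TensorProduct.tmul_mul_tmul, mul_one, Kgen_sq_one,
      ← Algebra.TensorProduct.one_def]

/-- forward map `K 5 0 → K 4 0 ⊗ K 1 0` -/
def phi4 : K 5 0 →ₐ[ℝ] K 4 0 ⊗[ℝ] K 1 0 := KliftC 5 0 uuGen uuGen_sq

lemma v4_sq (i : Fin (4+0)) : Kgen 5 0 ⟨(i:ℕ), by omega⟩ * Kgen 5 0 ⟨(i:ℕ), by omega⟩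
    = algebraMap ℝ (K 5 0) (if (i:ℕ) < 4 then 1 else -1) := by
  rw [if_pos (show (i:ℕ) < 4 by omega), map_one]
  exact Kgen_sq_one 5 ⟨(i:ℕ), by omega⟩

lemma v1_sq (i : Fin (1+0)) : Kgen 5 0 ⟨4, by omega⟩ * Kgen 5 0 ⟨4, by omega⟩
    = algebraMap ℝ (K 5 0) (if (i:ℕ) < 1 then 1 else -1) := by
  rw [if_pos (show (i:ℕ) < 1 by omega), map_one]
  exact Kgen_sq_one 5 ⟨4, by omega⟩

/-- backward map -/
def psi4 : K 4 0 ⊗[ℝ] K 1 0 →ₐ[ℝ] K 5 0 :=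
  Algebra.TensorProduct.lift
    (KliftC 4 0 (fun i => Kgen 5 0 ⟨(i:ℕ), by omega⟩) v4_sq)
    (KliftC 1 0 (fun i => Kgen 5 0 ⟨4, by omega⟩) v1_sq)
    (fun x y => Commute.all _ _)

/-- the equivalence `K 5 0 ≃ K 4 0 ⊗ K 1 0` -/
def E4 : K 5 0 ≃ₐ[ℝ] K 4 0 ⊗[ℝ] K 1 0 := by
  refine AlgEquiv.ofAlgHom phi4 psi4 ?_ ?_
  · refine Algebra.TensorProduct.ext ?_ ?_
    · apply KHom_ext
      intro i
      simp only [AlgHom.comp_apply, AlgHom.id_apply, Algebra.TensorProduct.includeLeft_apply]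
      rw [show psi4 ((Kgen 4 0 i) ⊗ₜ[ℝ] (1 : K 1 0))
          = KliftC 4 0 (fun i => Kgen 5 0 ⟨(i:ℕ), by omega⟩) v4_sq (Kgen 4 0 i)
            * KliftC 1 0 (fun i => Kgen 5 0 ⟨4, by omega⟩) v1_sq 1 from
        Algebra.TensorProduct.lift_tmul _ _ _ _ _]
      rw [map_one, mul_one, KliftC_gen]
      rw [show phi4 (Kgen 5 0 ⟨(i:ℕ), by omega⟩) = uuGen ⟨(i:ℕ), by omega⟩ from KliftC_gen _ _ _ _ _]
      rw [show uuGen ⟨(i:ℕ), by omega⟩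
          = (Kgen 4 0 ⟨(i:ℕ), by omega⟩) ⊗ₜ[ℝ] (1 : K 1 0) from dif_pos (show (i:ℕ) < 4 by omega)]
    · apply KHom_ext
      intro i
      simp only [AlgHom.restrictScalars_apply, AlgHom.comp_apply, AlgHom.id_apply,
        Algebra.TensorProduct.includeRight_apply]
      rw [show psi4 ((1 : K 4 0) ⊗ₜ[ℝ] (Kgen 1 0 i))
          = KliftC 4 0 (fun i => Kgen 5 0 ⟨(i:ℕ), by omega⟩) v4_sq 1
            * KliftC 1 0 (fun i => Kgen 5 0 ⟨4, by omega⟩) v1_sq (Kgen 1 0 i) from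
        Algebra.TensorProduct.lift_tmul _ _ _ _ _]
      rw [map_one, one_mul, KliftC_gen]
      rw [show phi4 (Kgen 5 0 ⟨4, by omega⟩) = uuGen ⟨4, by omega⟩ from KliftC_gen _ _ _ _ _]
      rw [show uuGen ⟨4, by omega⟩
          = (1 : K 4 0) ⊗ₜ[ℝ] (Kgen 1 0 ⟨0, by omega⟩) from dif_neg (show ¬((4:ℕ) < 4) by omega)]
      rw [show i = (⟨0, by omega⟩ : Fin (1+0)) from Fin.ext (show (i:ℕ) = 0 by omega)]
  · apply KHom_ext
    intro i
    rw [AlgHom.comp_apply, AlgHom.id_apply]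
    rw [show phi4 (Kgen 5 0 i) = uuGen i from KliftC_gen _ _ _ _ _]
    rw [uuGen]
    split_ifs with h
    · rw [show psi4 ((Kgen 4 0 ⟨(i:ℕ), by omega⟩) ⊗ₜ[ℝ] (1 : K 1 0))
          = KliftC 4 0 (fun i => Kgen 5 0 ⟨(i:ℕ), by omega⟩) v4_sq (Kgen 4 0 ⟨(i:ℕ), by omega⟩)
            * KliftC 1 0 (fun i => Kgen 5 0 ⟨4, by omega⟩) v1_sq 1 from
        Algebra.TensorProduct.lift_tmul _ _ _ _ _]
      rw [map_one, mul_one, KliftC_gen]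
    · rw [show psi4 ((1 : K 4 0) ⊗ₜ[ℝ] (Kgen 1 0 ⟨0, by omega⟩))
          = KliftC 4 0 (fun i => Kgen 5 0 ⟨(i:ℕ), by omega⟩) v4_sq 1
            * KliftC 1 0 (fun i => Kgen 5 0 ⟨4, by omega⟩) v1_sq (Kgen 1 0 ⟨0, by omega⟩) from
        Algebra.TensorProduct.lift_tmul _ _ _ _ _]
      rw [map_one, one_mul, KliftC_gen]
      exact congrArg (Kgen 5 0) (Fin.ext (show (4:ℕ) = (i:ℕ) by omega))

end Aux

theorem stmt18 : Nonempty ((K 4 0 ⊗[ℝ] Cl 3 18) ≃ₐ[ℝ] (K 5 0 ⊗[ℝ] Cl 11 9)) := by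
  have E1 : Cl 3 18 ≃ₐ[ℝ] Cl 11 10 := (Aux.flipEquiv 3 14).trans (Aux.flipEquiv 7 10)
  exact ⟨(Algebra.TensorProduct.congr AlgEquiv.refl (E1.trans Aux.E3)).trans
    ((Algebra.TensorProduct.assoc ℝ ℝ ℝ (K 4 0) (K 1 0) (Cl 11 9)).symm.trans
      (Algebra.TensorProduct.congr Aux.E4.symm AlgEquiv.refl))⟩
end
end
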